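/- arXiv:1808.07600 — 5 statements merged into one kernel-verified Lean document; each statement's English description precedes it below -/
import Mathlib

section
/- Let p be an integer-valued supermodular set-function on the subsets of a nonempty finite set S with p(∅) = 0, and let m be a decreasingly minimal element of Ḃ(p). Define C₀(m) := ∅ and, recursively for i ≥ 1 as long as C_{i−1}(m) ≠ S: β_i(m) := max{ m(s) : s ∈ S ∖ C_{i−1}(m) } and C_i(m) := the intersection of all m-tight sets containing {s ∈ S : m(s) ≥ β_i(m)}. Then C_{i−1}(m) ⊊ C_i(m) for every i (so the recursion terminates with some C_{q(m)}(m) = S), and for any two decreasingly minimal elements m and z of Ḃ(p) one has q(m) = q(z), and β_i(m) = β_i(z) and C_i(m) = C_i(z) for every i = 1, …, q(m); that is, the chain C₁ ⊂ C₂ ⊂ ⋯ ⊂ C_q and the sequence β₁ > β₂ > ⋯ > β_q do not depend on the choice of the dec-min element. -/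
open Finset

variable {α : Type*}

/-- Integer-valued supermodular set-function. -/
def Supermodular [DecidableEq α] (p : Finset α → ℤ) : Prop :=
  ∀ X Y : Finset α, p X + p Y ≤ p (X ∩ Y) + p (X ∪ Y)

/-- The M-convex set `Ḃ(p)` of integral elements of the base-polyhedron `B'(p)`:
all `m : α → ℤ` with `m̃(X) ≥ p(X)` for every `X` and `m̃(S) = p(S)`. -/
def Bdot [Fintype α] (p : Finset α → ℤ) : Set (α → ℤ) :=
  {m | (∀ X : Finset α, p X ≤ ∑ s ∈ X, m s) ∧ (∑ s, m s) = p Finset.univ}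

/-- `x↓`: the values of `x` arranged in nonincreasing order. -/
def sortedDesc [Fintype α] (x : α → ℤ) : List ℤ :=
  ((Finset.univ.val.map x).sort (· ≤ ·)).reverse

/-- `x↑`: the values of `x` arranged in nondecreasing order. -/
def sortedAsc [Fintype α] (x : α → ℤ) : List ℤ :=
  (Finset.univ.val.map x).sort (· ≤ ·)

/-- `x ≤_dec y`: `x↓` is lexicographically less than or equal to `y↓`. -/
def DecLE [Fintype α] (x y : α → ℤ) : Prop :=
  sortedDesc x = sortedDesc y ∨ List.Lex (· < ·) (sortedDesc x) (sortedDesc y)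

/-- `x ≤_inc y`: `x↑` is lexicographically less than or equal to `y↑`. -/
def IncLE [Fintype α] (x y : α → ℤ) : Prop :=
  sortedAsc x = sortedAsc y ∨ List.Lex (· < ·) (sortedAsc x) (sortedAsc y)

/-- `m` is a decreasingly minimal element of `Bdot p`. -/
def DecMin [Fintype α] (p : Finset α → ℤ) (m : α → ℤ) : Prop :=
  m ∈ Bdot p ∧ ∀ y ∈ Bdot p, DecLE m y


set_option linter.unusedSectionVars false
set_option maxHeartbeats 1000000

namespace Stmt9Aux

variable [Fintype α] [DecidableEq α]

lemma lex_irrefl (L : List ℤ) : ¬ List.Lex (· < ·) L L := by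
  induction L with
  | nil => intro h; cases h
  | cons a L ih =>
    intro h
    cases h with
    | cons h => exact ih h
    | rel h => exact lt_irrefl _ h

lemma lex_asymm {L M : List ℤ} (h1 : List.Lex (· < ·) L M)
    (h2 : List.Lex (· < ·) M L) : False := by
  induction h1 with
  | nil => cases h2
  | @cons a l m h ih =>
    cases h2 with
    | cons h' => exact ih h'
    | rel h' => exact lt_irrefl _ h'
  | @rel a l b m h =>
    cases h2 with
    | cons h' => exact lt_irrefl _ h
    | rel h' => exact lt_irrefl _ (h.trans h')

lemma head_bound {x : ℤ} {L : List ℤ} (h : (x :: L).Pairwise (· ≥ ·)) {e : ℤ}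
    (he : e ∈ x :: L) : e ≤ x := by
  rcases List.mem_cons.mp he with rfl | he
  · exact le_rfl
  · exact (List.pairwise_cons.mp h).1 e he

lemma lex_of_count : ∀ (L M : List ℤ), L.Pairwise (· ≥ ·) → M.Pairwise (· ≥ ·) →
    ∀ a : ℤ, M.count a < L.count a → (∀ v, a < v → M.count v = L.count v) →
    List.Lex (· < ·) M L := by
  intro L
  induction L with
  | nil => intro M _ _ a hc _; simp at hc
  | cons x L ih =>
    intro M hL hM a hc heq
    cases M with
    | nil => exact List.Lex.nil
    | cons y M =>
      rcases lt_trichotomy y x with h | h | h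
      · exact List.Lex.rel h
      · subst h
        refine List.Lex.cons ?_
        refine ih M hL.of_cons hM.of_cons a ?_ ?_
        · have := hc
          simp only [List.count_cons] at this
          omega
        · intro v hv
          have := heq v hv
          simp only [List.count_cons] at this
          omega
      · exfalso
        rcases le_or_gt y a with hya | hay
        · have h0 : (x :: L).count a = 0 := by
            rw [List.count_eq_zero]
            intro hmem
            have := head_bound hL hmem
            omega
          omega
        · have h0 : (x :: L).count y = 0 := by
            rw [List.count_eq_zero]
            intro hmem
            have := head_bound hL hmem
            omega
          have h1 := heq y hay
          have h2 : 1 ≤ (y :: M).count y := by simp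
          omega


lemma sd_coe (x : α → ℤ) : (↑(sortedDesc x) : Multiset ℤ) = Finset.univ.val.map x := by
  rw [sortedDesc, Multiset.coe_reverse, Multiset.sort_eq]

lemma sd_sorted (x : α → ℤ) : (sortedDesc x).Pairwise (· ≥ ·) := by
  have h := Multiset.pairwise_sort (Finset.univ.val.map x) (· ≤ ·)
  rw [sortedDesc]
  rw [List.pairwise_reverse]
  exact h

lemma sd_eq_iff_mset (x y : α → ℤ) :
    sortedDesc x = sortedDesc y ↔ Finset.univ.val.map x = Finset.univ.val.map y := by
  constructor
  · intro h
    rw [← sd_coe x, ← sd_coe y, h]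
  · intro h
    rw [sortedDesc, sortedDesc, h]

lemma sd_count (x : α → ℤ) (a : ℤ) :
    (sortedDesc x).count a = Multiset.count a (Finset.univ.val.map x) := by
  rw [← sd_coe x, Multiset.coe_count]


/-- `X` is `m`-tight. -/
def Tight (p : Finset α → ℤ) (m : α → ℤ) (X : Finset α) : Prop :=
  ∑ v ∈ X, m v = p X

lemma tight_univ {p : Finset α → ℤ} {m : α → ℤ} (hm : m ∈ Bdot p) :
    Tight p m Finset.univ := hm.2

lemma tight_empty {p : Finset α → ℤ} (h0 : p ∅ = 0) (m : α → ℤ) :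
    Tight p m ∅ := by simp [Tight, h0]

lemma tight_inter {p : Finset α → ℤ} {m : α → ℤ} (hp : Supermodular p)
    (hm : m ∈ Bdot p) {X Y : Finset α} (hX : Tight p m X) (hY : Tight p m Y) :
    Tight p m (X ∩ Y) := by
  have hkey : ∑ v ∈ X ∪ Y, m v + ∑ v ∈ X ∩ Y, m v = ∑ v ∈ X, m v + ∑ v ∈ Y, m v :=
    Finset.sum_union_inter
  have h1 := hm.1 (X ∩ Y)
  have h2 := hm.1 (X ∪ Y)
  have h3 := hp X Y
  rw [Tight] at *
  omega

lemma tight_union {p : Finset α → ℤ} {m : α → ℤ} (hp : Supermodular p)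
    (hm : m ∈ Bdot p) {X Y : Finset α} (hX : Tight p m X) (hY : Tight p m Y) :
    Tight p m (X ∪ Y) := by
  have hkey : ∑ v ∈ X ∪ Y, m v + ∑ v ∈ X ∩ Y, m v = ∑ v ∈ X, m v + ∑ v ∈ Y, m v :=
    Finset.sum_union_inter
  have h1 := hm.1 (X ∩ Y)
  have h2 := hm.1 (X ∪ Y)
  have h3 := hp X Y
  rw [Tight] at *
  omega

open scoped Classical in
/-- The smallest `m`-tight set containing `T`. -/
noncomputable def Dm (p : Finset α → ℤ) (m : α → ℤ) (T : Finset α) : Finset α :=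
  Finset.univ.filter (fun u => ∀ X : Finset α, Tight p m X → T ⊆ X → u ∈ X)

lemma mem_Dm {p : Finset α → ℤ} {m : α → ℤ} {T : Finset α} {u : α} :
    u ∈ Dm p m T ↔ ∀ X : Finset α, Tight p m X → T ⊆ X → u ∈ X := by
  simp [Dm]

lemma Dm_subset {p : Finset α → ℤ} {m : α → ℤ} {T X : Finset α}
    (hX : Tight p m X) (hTX : T ⊆ X) : Dm p m T ⊆ X :=
  fun _ hu => mem_Dm.mp hu X hX hTX

lemma subset_Dm {p : Finset α → ℤ} {m : α → ℤ} {T : Finset α} : T ⊆ Dm p m T :=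
  fun _ hu => mem_Dm.mpr (fun _ _ hTX => hTX hu)

lemma inf_tight {p : Finset α → ℤ} {m : α → ℤ} (hp : Supermodular p)
    (hm : m ∈ Bdot p) (F : Finset (Finset α)) (hF : ∀ X ∈ F, Tight p m X) :
    Tight p m (F.inf id) := by
  induction F using Finset.induction_on with
  | empty => simpa [Finset.inf_empty, Finset.top_eq_univ] using tight_univ hm
  | @insert X F hX ih =>
    rw [Finset.inf_insert]
    exact tight_inter hp hm (hF X (mem_insert_self _ _))
      (ih fun Y hY => hF Y (mem_insert_of_mem hY))

lemma mem_inf' (F : Finset (Finset α)) (u : α) :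
    u ∈ F.inf id ↔ ∀ X ∈ F, u ∈ X := by
  induction F using Finset.induction_on with
  | empty => simp [Finset.top_eq_univ]
  | @insert X F hX ih =>
    simp [Finset.inf_insert, Finset.inf_eq_inter, ih]

lemma Dm_tight {p : Finset α → ℤ} {m : α → ℤ} (hp : Supermodular p)
    (hm : m ∈ Bdot p) (T : Finset α) : Tight p m (Dm p m T) := by
  classical
  have hEq : Dm p m T =
      (Finset.univ.filter (fun X : Finset α => Tight p m X ∧ T ⊆ X)).inf id := by
    ext u
    rw [mem_Dm, mem_inf']
    simp
  rw [hEq]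
  exact inf_tight hp hm _ (fun X hX => (mem_filter.mp hX).2.1)

/-- The level set `{u : b ≤ m u}`. -/
def level (m : α → ℤ) (b : ℤ) : Finset α :=
  Finset.univ.filter (fun u => b ≤ m u)

lemma mem_level {m : α → ℤ} {b : ℤ} {u : α} : u ∈ level m b ↔ b ≤ m u := by
  simp [level]

/-- The elementary exchange `m - χ_s + χ_t`. -/
def xchg (m : α → ℤ) (s t : α) : α → ℤ :=
  fun u => m u + (if u = t then 1 else 0) - (if u = s then 1 else 0)

lemma sum_xchg (m : α → ℤ) (s t : α) (X : Finset α) :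
    ∑ u ∈ X, xchg m s t u =
      ∑ u ∈ X, m u + (if t ∈ X then 1 else 0) - (if s ∈ X then 1 else 0) := by
  simp only [xchg]
  rw [Finset.sum_sub_distrib, Finset.sum_add_distrib, Finset.sum_ite_eq' X t (fun _ => (1:ℤ)),
    Finset.sum_ite_eq' X s (fun _ => (1:ℤ))]

lemma xchg_apply_s {m : α → ℤ} {s t : α} (hst : s ≠ t) : xchg m s t s = m s - 1 := by
  simp [xchg, hst]

lemma xchg_apply_t {m : α → ℤ} {s t : α} (hst : s ≠ t) : xchg m s t t = m t + 1 := by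
  simp [xchg, hst.symm]

lemma xchg_apply_other {m : α → ℤ} {s t u : α} (hus : u ≠ s) (hut : u ≠ t) :
    xchg m s t u = m u := by
  simp [xchg, hus, hut]

/-- If `m - χ_s + χ_t` is feasible, then every `m`-tight set containing `s` contains `t`. -/
lemma F1 {p : Finset α → ℤ} {m : α → ℤ} {s t : α}
    (hx : xchg m s t ∈ Bdot p) {X : Finset α} (hX : Tight p m X) (hs : s ∈ X) :
    t ∈ X := by
  by_contra ht
  have h := hx.1 X
  rw [sum_xchg, if_neg ht, if_pos hs] at h
  rw [Tight] at hX
  omega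

/-- If `m` is feasible, then every `(m - χ_s + χ_t)`-tight set containing `t` contains `s`. -/
lemma F2 {p : Finset α → ℤ} {m : α → ℤ} {s t : α}
    (hm : m ∈ Bdot p) {X : Finset α} (hX : Tight p (xchg m s t) X) (ht : t ∈ X) :
    s ∈ X := by
  by_contra hs
  have h := hm.1 X
  rw [Tight, sum_xchg, if_pos ht, if_neg hs] at hX
  omega

lemma tight_iff_xchg {p : Finset α → ℤ} {m : α → ℤ} {s t : α} {X : Finset α}
    (h : s ∈ X ↔ t ∈ X) : Tight p m X ↔ Tight p (xchg m s t) X := by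
  rw [Tight, Tight, sum_xchg]
  by_cases hs : s ∈ X
  · rw [if_pos hs, if_pos (h.mp hs)]; omega
  · rw [if_neg hs, if_neg (fun ht => hs (h.mpr ht))]; omega

/-- Exchange existence. -/
lemma exchange {p : Finset α → ℤ} {m z : α → ℤ} (hp : Supermodular p)
    (hm : m ∈ Bdot p) (hz : z ∈ Bdot p) {s : α} (hs : z s < m s) :
    ∃ t, t ≠ s ∧ m t < z t ∧ xchg m s t ∈ Bdot p := by
  classical
  set X0 := Dm p m {s} with hX0
  have hX0t : Tight p m X0 := Dm_tight hp hm _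
  have hsX0 : s ∈ X0 := subset_Dm (mem_singleton_self s)
  have hex : ∃ t ∈ X0, m t < z t := by
    by_contra h
    push_neg at h
    have hlt : ∑ u ∈ X0, z u < ∑ u ∈ X0, m u :=
      Finset.sum_lt_sum h ⟨s, hsX0, hs⟩
    have h2 := hz.1 X0
    rw [Tight] at hX0t
    omega
  obtain ⟨t, htX0, htlt⟩ := hex
  have hts : t ≠ s := by rintro rfl; omega
  refine ⟨t, hts, htlt, ?_, ?_⟩
  · intro X
    rw [sum_xchg]
    have h1 := hm.1 X
    by_cases hsX : s ∈ X
    · by_cases htX : t ∈ X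
      · rw [if_pos htX, if_pos hsX]; omega
      · have hnt : ¬ Tight p m X := fun hT =>
          htX (Dm_subset hT (singleton_subset_iff.mpr hsX) htX0)
        rw [Tight] at hnt
        rw [if_neg htX, if_pos hsX]
        omega
    · rw [if_neg hsX]
      by_cases htX : t ∈ X
      · rw [if_pos htX]; omega
      · rw [if_neg htX]; omega
  · rw [sum_xchg, if_pos (mem_univ t), if_pos (mem_univ s)]
    have := hm.2
    omega


/-- Multiset decomposition under an elementary exchange. -/
lemma mset_decomp (m : α → ℤ) {s t : α} (hst : s ≠ t) :
    ∃ R : Multiset ℤ,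
      Finset.univ.val.map m = m s ::ₘ m t ::ₘ R ∧
      Finset.univ.val.map (xchg m s t) = (m s - 1) ::ₘ (m t + 1) ::ₘ R := by
  classical
  have hs : s ∈ (Finset.univ : Finset α).val := by simp
  have hnd : ((Finset.univ : Finset α).val).Nodup := (Finset.univ : Finset α).nodup
  have ht' : t ∈ ((Finset.univ : Finset α).val).erase s := by
    rw [hnd.mem_erase_iff]
    exact ⟨hst.symm, by simp⟩
  set R' : Multiset α := (((Finset.univ : Finset α).val).erase s).erase t with hR'
  have hdec : (Finset.univ : Finset α).val = s ::ₘ t ::ₘ R' := by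
    rw [hR', Multiset.cons_erase ht', Multiset.cons_erase hs]
  have hmemR' : ∀ u ∈ R', u ≠ s ∧ u ≠ t := by
    intro u hu
    have hnd2 : (((Finset.univ : Finset α).val).erase s).Nodup := hnd.erase s
    have h1 := (hnd2.mem_erase_iff).mp hu
    have h2 := (hnd.mem_erase_iff).mp h1.2
    exact ⟨h2.1, h1.1⟩
  refine ⟨R'.map m, ?_, ?_⟩
  · rw [hdec]; simp
  · rw [hdec]
    simp only [Multiset.map_cons]
    rw [xchg_apply_s hst, xchg_apply_t hst]
    congr 2
    apply Multiset.map_congr rfl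
    intro u hu
    exact xchg_apply_other (hmemR' u hu).1 (hmemR' u hu).2

/-- A dec-min element admits no feasible exchange dropping a value by 2 or more. -/
lemma dec_min_exchange_bound {p : Finset α → ℤ} {m : α → ℤ} (hm : DecMin p m)
    {s t : α} (hst : s ≠ t) (hx : xchg m s t ∈ Bdot p) : m s - 1 ≤ m t := by
  by_contra hcon
  push_neg at hcon
  obtain ⟨R, hR1, hR2⟩ := mset_decomp m hst
  have hlex : List.Lex (· < ·) (sortedDesc (xchg m s t)) (sortedDesc m) := by
    apply lex_of_count _ _ (sd_sorted m) (sd_sorted (xchg m s t)) (m s)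
    · rw [sd_count, sd_count, hR1, hR2]
      simp only [Multiset.count_cons]
      split_ifs <;> omega
    · intro v hv
      rw [sd_count, sd_count, hR1, hR2]
      simp only [Multiset.count_cons]
      split_ifs <;> omega
  rcases hm.2 _ hx with he | hl
  · rw [he] at hlex
    exact lex_irrefl _ hlex
  · exact lex_asymm hl hlex

/-- An elementary exchange between consecutive values preserves the sorted vector,
hence dec-minimality. -/
lemma decmin_xchg {p : Finset α → ℤ} {m : α → ℤ} (hm : DecMin p m)
    {s t : α} (hst : s ≠ t) (hx : xchg m s t ∈ Bdot p) (hv : m t = m s - 1) :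
    sortedDesc (xchg m s t) = sortedDesc m ∧ DecMin p (xchg m s t) := by
  obtain ⟨R, hR1, hR2⟩ := mset_decomp m hst
  have hsd : sortedDesc (xchg m s t) = sortedDesc m := by
    rw [sd_eq_iff_mset, hR1, hR2, hv]
    have : m s - 1 + 1 = m s := by omega
    rw [this, Multiset.cons_swap]
  refine ⟨hsd, hx, ?_⟩
  intro y hy
  have := hm.2 y hy
  rwa [DecLE, hsd]


/-- Value bound in the smallest tight set of a singleton, for dec-min `m`. -/
lemma Dm_single_bound {p : Finset α → ℤ} {m : α → ℤ} (hm : DecMin p m)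
    (u v : α) (hv : v ∈ Dm p m {u}) : m u - 1 ≤ m v := by
  rcases eq_or_ne v u with rfl | hne
  · omega
  · apply dec_min_exchange_bound hm (Ne.symm hne)
    refine ⟨?_, ?_⟩
    · intro X
      rw [sum_xchg]
      have h1 := hm.1.1 X
      by_cases hu : u ∈ X
      · by_cases hvX : v ∈ X
        · rw [if_pos hvX, if_pos hu]; omega
        · have hnt : ¬ Tight p m X := fun hT =>
            hvX (Dm_subset hT (singleton_subset_iff.mpr hu) hv)
          rw [Tight] at hnt
          rw [if_neg hvX, if_pos hu]
          omega
      · rw [if_neg hu]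
        by_cases hvX : v ∈ X
        · rw [if_pos hvX]; omega
        · rw [if_neg hvX]; omega
    · rw [sum_xchg, if_pos (mem_univ v), if_pos (mem_univ u)]
      have := hm.1.2
      omega

lemma biUnion_tight {p : Finset α → ℤ} {m : α → ℤ} (hp : Supermodular p)
    (h0 : p ∅ = 0) (hm : m ∈ Bdot p) (F : Finset α) (f : α → Finset α)
    (hf : ∀ u ∈ F, Tight p m (f u)) : Tight p m (F.biUnion f) := by
  classical
  induction F using Finset.induction_on with
  | empty => simpa using tight_empty h0 m
  | @insert a F ha ih =>
    rw [Finset.biUnion_insert]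
    exact tight_union hp hm (hf a (mem_insert_self _ _))
      (ih fun u hu => hf u (mem_insert_of_mem hu))

/-- Value bound in the smallest tight set over a level set, for dec-min `m`. -/
lemma Dm_level_bound {p : Finset α → ℤ} {m : α → ℤ} (hp : Supermodular p)
    (h0 : p ∅ = 0) (hm : DecMin p m) (b : ℤ) (v : α)
    (hv : v ∈ Dm p m (level m b)) : b - 1 ≤ m v := by
  classical
  set U : Finset α := (level m b).biUnion (fun u => Dm p m {u}) with hU
  have hUt : Tight p m U :=
    biUnion_tight hp h0 hm.1 _ _ (fun u _ => Dm_tight hp hm.1 _)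
  have hTU : level m b ⊆ U := fun u hu =>
    Finset.mem_biUnion.mpr ⟨u, hu, subset_Dm (mem_singleton_self u)⟩
  have hvU : v ∈ U := Dm_subset hUt hTU hv
  obtain ⟨u, hu, hvDu⟩ := Finset.mem_biUnion.mp hvU
  have h1 := Dm_single_bound hm u v hvDu
  have h2 := mem_level.mp hu
  omega

/-- Next essential value: the max of `m` outside `A` (junk value `0` if `A = univ`). -/
noncomputable def nextβ (m : α → ℤ) (A : Finset α) : ℤ :=
  if h : (Finset.univ \ A).Nonempty then ((Finset.univ \ A).image m).max' (h.image m) else 0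

lemma nextβ_mem {m : α → ℤ} {A : Finset α} (hA : A ≠ Finset.univ) :
    ∃ u, u ∉ A ∧ m u = nextβ m A := by
  have hne : (Finset.univ \ A).Nonempty := by
    rw [Finset.sdiff_nonempty]
    exact fun h => hA (Finset.univ_subset_iff.mp h)
  rw [nextβ, dif_pos hne]
  have := Finset.max'_mem ((Finset.univ \ A).image m) (hne.image m)
  obtain ⟨u, hu, hum⟩ := Finset.mem_image.mp this
  exact ⟨u, (Finset.mem_sdiff.mp hu).2, hum⟩

lemma nextβ_ge {m : α → ℤ} {A : Finset α} {u : α} (hu : u ∉ A) :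
    m u ≤ nextβ m A := by
  have hne : (Finset.univ \ A).Nonempty := ⟨u, Finset.mem_sdiff.mpr ⟨mem_univ u, hu⟩⟩
  rw [nextβ, dif_pos hne]
  exact Finset.le_max' _ _ (Finset.mem_image.mpr ⟨u, Finset.mem_sdiff.mpr ⟨mem_univ u, hu⟩, rfl⟩)

/-- The canonical chain. -/
noncomputable def CC (p : Finset α → ℤ) (m : α → ℤ) : ℕ → Finset α
  | 0 => ∅
  | (i+1) =>
      if CC p m i = Finset.univ then Finset.univ
      else Dm p m (level m (nextβ m (CC p m i)))

lemma CC_tight {p : Finset α → ℤ} {m : α → ℤ} (hp : Supermodular p)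
    (h0 : p ∅ = 0) (hm : m ∈ Bdot p) (i : ℕ) : Tight p m (CC p m i) := by
  cases i with
  | zero => exact tight_empty h0 m
  | succ i =>
    rw [CC]
    split
    · exact tight_univ hm
    · exact Dm_tight hp hm _

lemma level_subset_CC {p : Finset α → ℤ} {m : α → ℤ} (i : ℕ) :
    level m (nextβ m (CC p m i)) ⊆ CC p m (i+1) := by
  rw [CC]
  split
  · exact fun u _ => mem_univ u
  · exact subset_Dm

lemma CC_pred_ne_univ {p : Finset α → ℤ} {m : α → ℤ} {i : ℕ}
    (h : CC p m (i+1) ≠ Finset.univ) : CC p m i ≠ Finset.univ := by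
  intro hc
  apply h
  rw [CC, if_pos hc]

/-- Strict decrease of the β-values along the chain. -/
lemma nextβ_lt {p : Finset α → ℤ} {m : α → ℤ} {i : ℕ}
    (hA : CC p m (i+1) ≠ Finset.univ) :
    nextβ m (CC p m (i+1)) < nextβ m (CC p m i) := by
  obtain ⟨w, hw, hwv⟩ := nextβ_mem (m := m) hA
  have hwlev : w ∉ level m (nextβ m (CC p m i)) := fun hmem =>
    hw (level_subset_CC i hmem)
  rw [mem_level] at hwlev
  omega

/-- Any tight set over the current level set contains the whole current chain member. -/
lemma CCsub {p : Finset α → ℤ} {m : α → ℤ} :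
    ∀ i : ℕ, CC p m i ≠ Finset.univ → ∀ X : Finset α, Tight p m X →
      level m (nextβ m (CC p m i)) ⊆ X → CC p m i ⊆ X := by
  intro i
  cases i with
  | zero => intro _ X _ _; simp [CC]
  | succ i =>
    intro hA X hX hlev
    have hprev : CC p m i ≠ Finset.univ := CC_pred_ne_univ hA
    have hβ : nextβ m (CC p m (i+1)) < nextβ m (CC p m i) := nextβ_lt hA
    have hlev' : level m (nextβ m (CC p m i)) ⊆ X := by
      intro u hu
      rw [mem_level] at hu
      exact hlev (mem_level.mpr (by omega))
    rw [CC, if_neg hprev]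
    exact Dm_subset hX hlev'

/-- Value bound along the chain, for dec-min `m`. -/
lemma CC_bound {p : Finset α → ℤ} {m : α → ℤ} (hp : Supermodular p)
    (h0 : p ∅ = 0) (hm : DecMin p m) (i : ℕ) (hA : CC p m i ≠ Finset.univ)
    {v : α} (hv : v ∈ CC p m (i+1)) :
    nextβ m (CC p m i) - 1 ≤ m v := by
  rw [CC, if_neg hA] at hv
  exact Dm_level_bound hp h0 hm _ v hv

lemma xchg_eq_comp {m : α → ℤ} {s t : α} (hst : s ≠ t) (hv : m t = m s - 1) :
    xchg m s t = m ∘ (Equiv.swap s t) := by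
  funext u
  rcases eq_or_ne u s with rfl | hus
  · rw [xchg_apply_s hst, Function.comp_apply, Equiv.swap_apply_left]
    omega
  · rcases eq_or_ne u t with rfl | hut
    · rw [xchg_apply_t hst, Function.comp_apply, Equiv.swap_apply_right]
      omega
    · rw [xchg_apply_other hus hut, Function.comp_apply,
        Equiv.swap_apply_of_ne_of_ne hus hut]

lemma image_sdiff_swap {A : Finset α} {s t : α} (hiff : s ∈ A ↔ t ∈ A) :
    (Finset.univ \ A).image (Equiv.swap s t) = Finset.univ \ A := by
  ext v
  simp only [Finset.mem_image, Finset.mem_sdiff, Finset.mem_univ, true_and]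
  constructor
  · rintro ⟨u, hu, rfl⟩
    rcases eq_or_ne u s with rfl | hus
    · rw [Equiv.swap_apply_left]; exact fun h => hu (hiff.mpr h)
    · rcases eq_or_ne u t with rfl | hut
      · rw [Equiv.swap_apply_right]; exact fun h => hu (hiff.mp h)
      · rwa [Equiv.swap_apply_of_ne_of_ne hus hut]
  · intro hv
    refine ⟨Equiv.swap s t v, ?_, Equiv.swap_apply_self s t v⟩
    rcases eq_or_ne v s with rfl | hvs
    · rw [Equiv.swap_apply_left]; exact fun h => hv (hiff.mpr h)
    · rcases eq_or_ne v t with rfl | hvt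
      · rw [Equiv.swap_apply_right]; exact fun h => hv (hiff.mp h)
      · rwa [Equiv.swap_apply_of_ne_of_ne hvs hvt]

lemma nextβ_xchg {m : α → ℤ} {s t : α} (hst : s ≠ t) (hv : m t = m s - 1)
    {A : Finset α} (hiff : s ∈ A ↔ t ∈ A) :
    nextβ (xchg m s t) A = nextβ m A := by
  have himg : (Finset.univ \ A).image (xchg m s t) = (Finset.univ \ A).image m := by
    rw [xchg_eq_comp hst hv]
    rw [show ((Finset.univ \ A).image (m ∘ (Equiv.swap s t))) =
      (((Finset.univ \ A).image (Equiv.swap s t)).image m) from (Finset.image_image).symm]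
    rw [image_sdiff_swap hiff]
  simp only [nextβ, himg]

/-- Single elementary exchange between consecutive values preserves the canonical chain. -/
lemma step_CC_eq {p : Finset α → ℤ} {m : α → ℤ} (hp : Supermodular p) (h0 : p ∅ = 0)
    (hm : DecMin p m) {s t : α} (hst : s ≠ t) (hx : xchg m s t ∈ Bdot p)
    (hv : m t = m s - 1) : ∀ i, CC p m i = CC p (xchg m s t) i := by
  have hm' : DecMin p (xchg m s t) := (decmin_xchg hm hst hx hv).2
  intro i
  induction i with
  | zero => rfl
  | succ i ih =>
    by_cases hA : CC p m i = Finset.univ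
    · rw [CC, CC, ← ih, if_pos hA, if_pos hA]
    · have hiff : s ∈ CC p m i ↔ t ∈ CC p m i := by
        constructor
        · intro hs
          exact F1 hx (CC_tight hp h0 hm.1 i) hs
        · intro ht
          have htight' : Tight p (xchg m s t) (CC p m i) := by
            rw [ih]; exact CC_tight hp h0 hm'.1 i
          exact F2 hm.1 htight' ht
      have hβ : nextβ (xchg m s t) (CC p m i) = nextβ m (CC p m i) :=
        nextβ_xchg hst hv hiff
      rw [CC, CC, ← ih, if_neg hA, if_neg hA, hβ]
      set b := nextβ m (CC p m i) with hb
      by_cases hsA : s ∈ CC p m i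
      · -- s and t both belong to the current chain member
        have htA : t ∈ CC p m i := hiff.mp hsA
        have hfam : ∀ X : Finset α, (Tight p m X ∧ level m b ⊆ X) ↔
            (Tight p (xchg m s t) X ∧ level (xchg m s t) b ⊆ X) := by
          intro X
          constructor
          · rintro ⟨hX, hlev⟩
            have hAX : CC p m i ⊆ X := CCsub i hA X hX hlev
            have hsX : s ∈ X := hAX hsA
            have htX : t ∈ X := hAX htA
            refine ⟨(tight_iff_xchg ⟨fun _ => htX, fun _ => hsX⟩).mp hX, ?_⟩
            intro u hu
            rcases eq_or_ne u s with rfl | hus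
            · exact hsX
            rcases eq_or_ne u t with rfl | hut
            · exact htX
            rw [mem_level, xchg_apply_other hus hut] at hu
            exact hlev (mem_level.mpr hu)
          · rintro ⟨hX, hlev⟩
            have hAX : CC p m i ⊆ X := by
              have h1 : CC p (xchg m s t) i ≠ Finset.univ := by rw [← ih]; exact hA
              have h2 : level (xchg m s t) (nextβ (xchg m s t) (CC p (xchg m s t) i)) ⊆ X := by
                rw [← ih, hβ]; exact hlev
              have h3 := CCsub i h1 X hX h2
              rwa [← ih] at h3
            have hsX : s ∈ X := hAX hsA
            have htX : t ∈ X := hAX htA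
            refine ⟨(tight_iff_xchg ⟨fun _ => htX, fun _ => hsX⟩).mpr hX, ?_⟩
            intro u hu
            rcases eq_or_ne u s with rfl | hus
            · exact hsX
            rcases eq_or_ne u t with rfl | hut
            · exact htX
            rw [mem_level] at hu
            rw [← xchg_apply_other hus hut (m := m) (s := s) (t := t)] at hu
            exact hlev (mem_level.mpr hu)
        ext u
        rw [mem_Dm, mem_Dm]
        constructor
        · intro h X hX hlev
          obtain ⟨h1, h2⟩ := (hfam X).mpr ⟨hX, hlev⟩
          exact h X h1 h2
        · intro h X hX hlev
          obtain ⟨h1, h2⟩ := (hfam X).mp ⟨hX, hlev⟩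
          exact h X h1 h2
      · -- s and t both outside the current chain member
        have htA : t ∉ CC p m i := fun ht => hsA (hiff.mpr ht)
        have hbs : m s ≤ b := nextβ_ge hsA
        rcases eq_or_lt_of_le hbs with hEq | hlt
        · -- b = m s
          have hfam : ∀ X : Finset α, (Tight p m X ∧ level m b ⊆ X) ↔
              (Tight p (xchg m s t) X ∧ level (xchg m s t) b ⊆ X) := by
            intro X
            constructor
            · rintro ⟨hX, hlev⟩
              have hsX : s ∈ X := hlev (mem_level.mpr (le_of_eq hEq.symm))
              have htX : t ∈ X := F1 hx hX hsX
              refine ⟨(tight_iff_xchg ⟨fun _ => htX, fun _ => hsX⟩).mp hX, ?_⟩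
              intro u hu
              rcases eq_or_ne u s with rfl | hus
              · exact hsX
              rcases eq_or_ne u t with rfl | hut
              · exact htX
              rw [mem_level, xchg_apply_other hus hut] at hu
              exact hlev (mem_level.mpr hu)
            · rintro ⟨hX, hlev⟩
              have htX : t ∈ X := by
                apply hlev
                rw [mem_level, xchg_apply_t hst]
                omega
              have hsX : s ∈ X := F2 hm.1 hX htX
              refine ⟨(tight_iff_xchg ⟨fun _ => htX, fun _ => hsX⟩).mpr hX, ?_⟩
              intro u hu
              rcases eq_or_ne u s with rfl | hus
              · exact hsX
              rcases eq_or_ne u t with rfl | hut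
              · exact htX
              rw [mem_level] at hu
              rw [← xchg_apply_other hus hut (m := m) (s := s) (t := t)] at hu
              exact hlev (mem_level.mpr hu)
          ext u
          rw [mem_Dm, mem_Dm]
          constructor
          · intro h X hX hlev
            obtain ⟨h1, h2⟩ := (hfam X).mpr ⟨hX, hlev⟩
            exact h X h1 h2
          · intro h X hX hlev
            obtain ⟨h1, h2⟩ := (hfam X).mp ⟨hX, hlev⟩
            exact h X h1 h2
        · -- m s < b
          have hlev_eq : level (xchg m s t) b = level m b := by
            ext u
            rw [mem_level, mem_level]
            rcases eq_or_ne u s with rfl | hus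
            · rw [xchg_apply_s hst]; omega
            rcases eq_or_ne u t with rfl | hut
            · rw [xchg_apply_t hst]; omega
            · rw [xchg_apply_other hus hut]
          have htX : t ∉ Dm p m (level m b) := by
            intro h
            have := Dm_level_bound hp h0 hm b t h
            omega
          have hsX : s ∉ Dm p m (level m b) := fun h =>
            htX (F1 hx (Dm_tight hp hm.1 _) h)
          have hsY : s ∉ Dm p (xchg m s t) (level (xchg m s t) b) := by
            intro h
            have := Dm_level_bound hp h0 hm' b s h
            rw [xchg_apply_s hst] at this
            omega
          have htY : t ∉ Dm p (xchg m s t) (level (xchg m s t) b) := fun h =>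
            hsY (F2 hm.1 (Dm_tight hp hm'.1 _) h)
          have hXm' : Tight p (xchg m s t) (Dm p m (level m b)) :=
            (tight_iff_xchg (iff_of_false hsX htX)).mp (Dm_tight hp hm.1 _)
          have hYm : Tight p m (Dm p (xchg m s t) (level (xchg m s t) b)) :=
            (tight_iff_xchg (iff_of_false hsY htY)).mpr (Dm_tight hp hm'.1 _)
          apply Finset.Subset.antisymm
          · exact Dm_subset hYm (by rw [← hlev_eq]; exact subset_Dm)
          · exact Dm_subset hXm' (by rw [hlev_eq]; exact subset_Dm)

lemma step_nextβ_eq {p : Finset α → ℤ} {m : α → ℤ} (hp : Supermodular p) (h0 : p ∅ = 0)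
    (hm : DecMin p m) {s t : α} (hst : s ≠ t) (hx : xchg m s t ∈ Bdot p)
    (hv : m t = m s - 1) :
    ∀ i, nextβ m (CC p m i) = nextβ (xchg m s t) (CC p (xchg m s t) i) := by
  have hm' : DecMin p (xchg m s t) := (decmin_xchg hm hst hx hv).2
  intro i
  rw [← step_CC_eq hp h0 hm hst hx hv i]
  by_cases hA : CC p m i = Finset.univ
  · rw [hA]
    have hempty : ¬ (Finset.univ \ (Finset.univ : Finset α)).Nonempty := by simp
    rw [nextβ, nextβ, dif_neg hempty, dif_neg hempty]
  · have hiff : s ∈ CC p m i ↔ t ∈ CC p m i := by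
      constructor
      · intro hs
        exact F1 hx (CC_tight hp h0 hm.1 i) hs
      · intro ht
        have htight' : Tight p (xchg m s t) (CC p m i) := by
          rw [step_CC_eq hp h0 hm hst hx hv i]
          exact CC_tight hp h0 hm'.1 i
        exact F2 hm.1 htight' ht
    exact (nextβ_xchg hst hv hiff).symm

lemma path_CC_eq {p : Finset α → ℤ} (hp : Supermodular p) (h0 : p ∅ = 0) :
    ∀ n : ℕ, ∀ m z : α → ℤ, DecMin p m → DecMin p z →
      Finset.univ.val.map m = Finset.univ.val.map z →
      (∑ u, (m u - z u).natAbs) ≤ n →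
      ∀ i, CC p m i = CC p z i ∧ nextβ m (CC p m i) = nextβ z (CC p z i) := by
  intro n
  induction n with
  | zero =>
    intro m z hm hz hmset hsum i
    have hmz : m = z := by
      funext u
      have h1 : (∑ u, (m u - z u).natAbs) = 0 := Nat.le_zero.mp hsum
      have h2 := Finset.sum_eq_zero_iff.mp h1 u (mem_univ u)
      omega
    rw [hmz]
    exact ⟨rfl, rfl⟩
  | succ n ih =>
    have key : ∀ m z : α → ℤ, DecMin p m → DecMin p z →
        Finset.univ.val.map m = Finset.univ.val.map z →
        (∑ u, (m u - z u).natAbs) ≤ n + 1 →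
        ∀ u₀ : α, z u₀ < m u₀ →
        (∀ u, m u ≠ z u → max (m u) (z u) ≤ max (m u₀) (z u₀)) →
        ∀ i, CC p m i = CC p z i ∧ nextβ m (CC p m i) = nextβ z (CC p z i) := by
      intro m z hm hz hmset hsum u₀ hgt hmax
      obtain ⟨t, hts, htlt, hxb⟩ := exchange hp hm.1 hz.1 hgt
      have hst : u₀ ≠ t := (Ne.symm hts)
      have htne : m t ≠ z t := by omega
      have h1 : max (m t) (z t) ≤ max (m u₀) (z u₀) := hmax t htne
      have hb2 : m u₀ - 1 ≤ m t := dec_min_exchange_bound hm hst hxb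
      have hveq : m t = m u₀ - 1 := by omega
      have hm1 := decmin_xchg hm hst hxb hveq
      have ht' : t ∈ Finset.univ.erase u₀ :=
        Finset.mem_erase.mpr ⟨hts, mem_univ t⟩
      have hsum1 : (∑ u, ((xchg m u₀ t) u - z u).natAbs) + 1 ≤
          ∑ u, (m u - z u).natAbs := by
        have hrw : ∀ f : α → ℕ, ∑ u, f u =
            f u₀ + (f t + ∑ u ∈ (Finset.univ.erase u₀).erase t, f u) := by
          intro f
          rw [Finset.add_sum_erase _ f ht', Finset.add_sum_erase _ f (mem_univ u₀)]
        rw [hrw, hrw]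
        have hcong : ∑ u ∈ (Finset.univ.erase u₀).erase t, ((xchg m u₀ t) u - z u).natAbs
            = ∑ u ∈ (Finset.univ.erase u₀).erase t, (m u - z u).natAbs := by
          apply Finset.sum_congr rfl
          intro u hu
          have h3 := Finset.mem_erase.mp hu
          have h4 := Finset.mem_erase.mp h3.2
          rw [xchg_apply_other h4.1 h3.1]
        rw [hcong, xchg_apply_s hst, xchg_apply_t hst]
        omega
      have hmset1 : Finset.univ.val.map (xchg m u₀ t) = Finset.univ.val.map z := by
        obtain ⟨R, hR1, hR2⟩ := mset_decomp m hst
        rw [hR2, ← hmset, hR1, hveq]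
        have e1 : m u₀ - 1 + 1 = m u₀ := by omega
        rw [e1, Multiset.cons_swap]
      have hrec := ih (xchg m u₀ t) z hm1.2 hz hmset1 (by omega)
      intro i
      refine ⟨?_, ?_⟩
      · rw [step_CC_eq hp h0 hm hst hxb hveq i]
        exact (hrec i).1
      · rw [step_nextβ_eq hp h0 hm hst hxb hveq i]
        exact (hrec i).2
    intro m z hm hz hmset hsum
    by_cases hmz : m = z
    · rw [hmz]
      exact fun i => ⟨rfl, rfl⟩
    · have hD : (Finset.univ.filter (fun u => m u ≠ z u)).Nonempty := by
        by_contra h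
        rw [Finset.not_nonempty_iff_eq_empty, Finset.filter_eq_empty_iff] at h
        apply hmz
        funext u
        have := h (mem_univ u)
        simpa using this
      obtain ⟨u₀, hu₀D, hu₀max⟩ :=
        Finset.exists_max_image (Finset.univ.filter (fun u => m u ≠ z u))
          (fun u => max (m u) (z u)) hD
      have hu₀ne : m u₀ ≠ z u₀ := by
        have := Finset.mem_filter.mp hu₀D
        exact this.2
      have hmax : ∀ u, m u ≠ z u → max (m u) (z u) ≤ max (m u₀) (z u₀) := by
        intro u hu
        exact hu₀max u (Finset.mem_filter.mpr ⟨mem_univ u, hu⟩)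
      rcases lt_or_gt_of_ne hu₀ne with hlt | hgt
      · -- z u₀ > m u₀ : run symmetric argument
        have hmax' : ∀ u, z u ≠ m u → max (z u) (m u) ≤ max (z u₀) (m u₀) := by
          intro u hu
          rw [max_comm (z u) (m u), max_comm (z u₀) (m u₀)]
          exact hmax u (Ne.symm hu)
        have hsum' : (∑ u, (z u - m u).natAbs) ≤ n + 1 := by
          have : (∑ u, (z u - m u).natAbs) = ∑ u, (m u - z u).natAbs := by
            apply Finset.sum_congr rfl
            intro u _
            omega
          omega
        have := key z m hz hm hmset.symm hsum' u₀ hlt hmax'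
        intro i
        exact ⟨(this i).1.symm, (this i).2.symm⟩
      · exact key m z hm hz hmset hsum u₀ hgt hmax

/-- The canonical chain and β-values agree for any two dec-min elements. -/
lemma decmin_CC_eq {p : Finset α → ℤ} (hp : Supermodular p) (h0 : p ∅ = 0)
    {m z : α → ℤ} (hm : DecMin p m) (hz : DecMin p z) :
    ∀ i, CC p m i = CC p z i ∧ nextβ m (CC p m i) = nextβ z (CC p z i) := by
  have hsd : sortedDesc m = sortedDesc z := by
    rcases hm.2 z hz.1 with h | h
    · exact h
    · rcases hz.2 m hm.1 with h' | h'
      · exact h'.symm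
      · exact absurd h (fun hh => lex_asymm hh h')
  exact path_CC_eq hp h0 (∑ u, (m u - z u).natAbs) m z hm hz
    ((sd_eq_iff_mset m z).mp hsd) le_rfl

/-- The hypotheses of the theorem pin down `C` and `β` as the canonical chain. -/
lemma interp {p : Finset α → ℤ} (hp : Supermodular p) (h0 : p ∅ = 0)
    {m : α → ℤ} (hm : DecMin p m) {q : ℕ} {C : ℕ → Finset α} {β : ℕ → ℤ}
    (hC0 : C 0 = ∅)
    (hrec : ∀ i : ℕ, i < q → C i ≠ Finset.univ ∧
      IsGreatest {v : ℤ | ∃ s : α, s ∉ C i ∧ m s = v} (β (i + 1)) ∧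
      (∀ s : α, s ∈ C (i + 1) ↔ ∀ X : Finset α, (∑ v ∈ X, m v = p X) →
        (∀ t : α, β (i + 1) ≤ m t → t ∈ X) → s ∈ X)) :
    (∀ i, i ≤ q → C i = CC p m i) ∧ (∀ i, i < q → β (i+1) = nextβ m (CC p m i)) := by
  have hβgen : ∀ i, i < q → C i = CC p m i → β (i+1) = nextβ m (CC p m i) := by
    intro i hilt hCi
    obtain ⟨hne, hgr, _⟩ := hrec i hilt
    have hCCne : CC p m i ≠ Finset.univ := by rw [← hCi]; exact hne
    have hgr2 : IsGreatest {v : ℤ | ∃ s : α, s ∉ C i ∧ m s = v}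
        (nextβ m (CC p m i)) := by
      constructor
      · obtain ⟨u, hu, hum⟩ := nextβ_mem hCCne
        exact ⟨u, by rw [hCi]; exact hu, hum⟩
      · rintro v ⟨u, hu, rfl⟩
        apply nextβ_ge
        rw [← hCi]
        exact hu
    exact hgr.unique hgr2
  have hC : ∀ i, i ≤ q → C i = CC p m i := by
    intro i
    induction i with
    | zero => intro _; rw [hC0]; rfl
    | succ i ih =>
      intro hi
      have hilt : i < q := Nat.lt_of_succ_le hi
      have hCi : C i = CC p m i := ih (Nat.le_of_lt hilt)
      obtain ⟨hne, hgr, hchar⟩ := hrec i hilt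
      have hCCne : CC p m i ≠ Finset.univ := by rw [← hCi]; exact hne
      have hβ : β (i+1) = nextβ m (CC p m i) := hβgen i hilt hCi
      ext u
      rw [hchar u, CC, if_neg hCCne, mem_Dm, ← hβ]
      constructor
      · intro h X hX hlev
        exact h X hX (fun w hw => hlev (mem_level.mpr hw))
      · intro h X hX hall
        exact h X hX (fun w hw => hall w (mem_level.mp hw))
  exact ⟨hC, fun i hi => hβgen i hi (hC i (Nat.le_of_lt hi))⟩

end Stmt9Aux

/-- The canonical chain and essential value-sequence obtained from a dec-min element
of `Ḃ(p)` are strictly increasing / well defined and do not depend on the choice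
of the dec-min element. -/
theorem stmt9 [Fintype α] [DecidableEq α] [Nonempty α]
    (p : Finset α → ℤ) (hp : Supermodular p) (h0 : p ∅ = 0)
    (m z : α → ℤ) (hm : DecMin p m) (hz : DecMin p z)
    (q q' : ℕ) (C C' : ℕ → Finset α) (β β' : ℕ → ℤ)
    (hC0 : C 0 = ∅) (hC0' : C' 0 = ∅)
    -- the recursion for m
    (hrec : ∀ i : ℕ, i < q →
      C i ≠ Finset.univ ∧
      IsGreatest {v : ℤ | ∃ s : α, s ∉ C i ∧ m s = v} (β (i + 1)) ∧
      (∀ s : α, s ∈ C (i + 1) ↔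
        ∀ X : Finset α, (∑ v ∈ X, m v = p X) →
          (∀ t : α, β (i + 1) ≤ m t → t ∈ X) → s ∈ X))
    (hstop : C q = Finset.univ)
    -- the recursion for z
    (hrec' : ∀ i : ℕ, i < q' →
      C' i ≠ Finset.univ ∧
      IsGreatest {v : ℤ | ∃ s : α, s ∉ C' i ∧ z s = v} (β' (i + 1)) ∧
      (∀ s : α, s ∈ C' (i + 1) ↔
        ∀ X : Finset α, (∑ v ∈ X, z v = p X) →
          (∀ t : α, β' (i + 1) ≤ z t → t ∈ X) → s ∈ X))
    (hstop' : C' q' = Finset.univ) :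
    (∀ i : ℕ, i < q → C i ⊂ C (i + 1)) ∧
    q = q' ∧
    (∀ i : ℕ, 1 ≤ i → i ≤ q → β i = β' i ∧ C i = C' i) := by
  classical
  have hlevelC : ∀ i, i < q → ∀ v, β (i+1) ≤ m v → v ∈ C (i+1) := by
    intro i hi v hv
    rw [((hrec i hi).2.2 v)]
    intro X _ hlev
    exact hlev v hv
  have hlevelC' : ∀ i, i < q' → ∀ v, β' (i+1) ≤ z v → v ∈ C' (i+1) := by
    intro i hi v hv
    rw [((hrec' i hi).2.2 v)]
    intro X _ hlev
    exact hlev v hv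
  have hsub : ∀ i, i < q → C i ⊆ C (i+1) := by
    intro i hi
    cases i with
    | zero => rw [hC0]; exact Finset.empty_subset _
    | succ j =>
      have hj : j < q := Nat.lt_of_succ_lt hi
      obtain ⟨hne, hgr, hchar⟩ := hrec (j+1) hi
      obtain ⟨⟨w, hw, hwv⟩, hub⟩ := hgr
      have hwlt : m w < β (j+1) := by
        by_contra hcon
        push_neg at hcon
        exact hw (hlevelC j hj w hcon)
      intro u hu
      rw [(hrec j hj).2.2 u] at hu
      rw [hchar u]
      intro X hX hlev
      apply hu X hX
      intro w' hw'
      apply hlev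
      omega
  have hstrict : ∀ i, i < q → C i ⊂ C (i+1) := by
    intro i hi
    obtain ⟨hne, hgr, hchar⟩ := hrec i hi
    obtain ⟨⟨w, hw, hwv⟩, hub⟩ := hgr
    rw [Finset.ssubset_iff_of_subset (hsub i hi)]
    exact ⟨w, hlevelC i hi w hwv.ge, hw⟩
  obtain ⟨hCm, hβm⟩ := Stmt9Aux.interp hp h0 hm hC0 hrec
  obtain ⟨hCz, hβz⟩ := Stmt9Aux.interp hp h0 hz hC0' hrec'
  have hCC := Stmt9Aux.decmin_CC_eq hp h0 hm hz
  have hqq : q = q' := by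
    by_contra hne
    rcases Nat.lt_or_ge q q' with h | h
    · have h1 : C' q ≠ Finset.univ := (hrec' q h).1
      apply h1
      rw [hCz q (Nat.le_of_lt h), ← (hCC q).1, ← hCm q le_rfl, hstop]
    · have hlt : q' < q := lt_of_le_of_ne h (Ne.symm hne)
      have h1 : C q' ≠ Finset.univ := (hrec q' hlt).1
      apply h1
      rw [hCm q' (Nat.le_of_lt hlt), (hCC q').1, ← hCz q' le_rfl, hstop']
  refine ⟨hstrict, hqq, ?_⟩
  intro i h1 h2
  obtain ⟨j, rfl⟩ : ∃ j, i = j + 1 := ⟨i - 1, by omega⟩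
  have hjq : j < q := by omega
  have hjq' : j < q' := by omega
  constructor
  · rw [hβm j hjq, hβz j hjq', (hCC j).1]
    have := (hCC j).2
    rw [(hCC j).1] at this
    exact this
  · rw [hCm (j+1) h2, hCz (j+1) (by omega), (hCC (j+1)).1]
end

section
/- Let p be an integer-valued supermodular set-function on the subsets of a nonempty finite set S with p(∅) = 0, and assume Ḃ(p) is nonempty. Then there exist a matroid M on ground set S and a vector Δ : S → ℤ such that the set of decreasingly minimal elements of Ḃ(p) equals { χ_L + Δ : L is a base of M }; that is, m ∈ Ḃ(p) is decreasingly minimal if and only if m = χ_L + Δ for some base L of M. -/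
open Finset

variable {α : Type*}

/-! ### Auxiliary material -/

section SortedDesc

variable [Fintype α]

lemma sortedDesc_sorted (x : α → ℤ) : (sortedDesc x).Pairwise (· ≥ ·) := by
  have := Multiset.pairwise_sort (r := (· ≤ ·)) (s := Finset.univ.val.map x)
  exact List.pairwise_reverse.mpr this

lemma sortedDesc_length (x : α → ℤ) :
    (sortedDesc x).length = Fintype.card α := by
  simp [sortedDesc]

lemma sortedDesc_count (x : α → ℤ) (w : ℤ) :
    (sortedDesc x).count w = Multiset.count w (Finset.univ.val.map x) := by
  rw [sortedDesc, List.count_reverse]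
  rw [← Multiset.coe_count, Multiset.sort_eq]

lemma sortedDesc_eq_of_count (x y : α → ℤ)
    (h : ∀ w, Multiset.count w (Finset.univ.val.map x) = Multiset.count w (Finset.univ.val.map y)) :
    sortedDesc x = sortedDesc y := by
  unfold sortedDesc
  congr 1
  congr 1
  exact Multiset.ext.mpr fun w => h w

lemma decLE_iff_le (x y : α → ℤ) : DecLE x y ↔ sortedDesc x ≤ sortedDesc y := by
  rw [le_iff_lt_or_eq]
  exact or_comm

end SortedDesc

/-- If sorted-descending lists `u, v` have equal length, `v` has fewer copies of `c` than `u`,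
and equal counts above `c`, then `v` is lexicographically smaller than `u`. -/
lemma lex_of_count (c : ℤ) : ∀ (u v : List ℤ), u.Pairwise (· ≥ ·) → v.Pairwise (· ≥ ·) →
    u.length = v.length → v.count c < u.count c →
    (∀ w, c < w → u.count w = v.count w) →
    List.Lex (· < ·) v u := by
  intro u
  induction u with
  | nil => intro v _ _ _ hc _; simp at hc
  | cons a u ih =>
    intro v hu hv hlen hc habove
    cases v with
    | nil => exact List.Lex.nil
    | cons b v' =>
      have hu' : u.Pairwise (· ≥ ·) := (List.pairwise_cons.mp hu).2
      have hv' : v'.Pairwise (· ≥ ·) := (List.pairwise_cons.mp hv).2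
      have hau : ∀ x ∈ u, x ≤ a := (List.pairwise_cons.mp hu).1
      have hca : c ≤ a := by
        by_contra h
        push_neg at h
        have : (a :: u).count c = 0 := by
          rw [List.count_eq_zero]
          intro hmem
          rcases List.mem_cons.mp hmem with rfl | hmem
          · exact absurd rfl (ne_of_gt h)
          · exact absurd (hau c hmem) (not_le.mpr h)
        omega
      rcases lt_trichotomy b a with h | h | h
      · exact List.Lex.rel h
      · subst h
        apply List.Lex.cons
        apply ih v' hu' hv' (by simpa using hlen)
        · have h1 := List.count_cons (a := c) (b := b) (l := u)
          have h2 := List.count_cons (a := c) (b := b) (l := v')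
          simp only [beq_iff_eq] at h1 h2
          omega
        · intro w hw
          have h1 := List.count_cons (a := w) (b := b) (l := u)
          have h2 := List.count_cons (a := w) (b := b) (l := v')
          have := habove w hw
          simp only [beq_iff_eq] at h1 h2 this
          omega
      · exfalso
        have hcb : c < b := lt_of_le_of_lt hca h
        have := habove b hcb
        have hbmem : b ∈ b :: v' := List.mem_cons_self (a := b) (l := v')
        have : 0 < (a :: u).count b := by
          rw [this]
          exact List.count_pos_iff.mpr hbmem
        have hbin : b ∈ a :: u := List.count_pos_iff.mp this
        rcases List.mem_cons.mp hbin with rfl | hmem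
        · exact lt_irrefl _ h
        · exact absurd (hau b hmem) (not_le.mpr h)

/-- The vector `x - χ_s + χ_t`. -/
def exchVec [DecidableEq α] (x : α → ℤ) (s t : α) : α → ℤ :=
  fun i => x i + (if i = t then 1 else 0) - (if i = s then 1 else 0)

section ExchVec

variable [Fintype α] [DecidableEq α]

lemma exchVec_apply_s (x : α → ℤ) {s t : α} (hst : s ≠ t) :
    exchVec x s t s = x s - 1 := by simp [exchVec, hst]

lemma exchVec_apply_t (x : α → ℤ) {s t : α} (hst : s ≠ t) :
    exchVec x s t t = x t + 1 := by simp [exchVec, hst.symm]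

lemma exchVec_apply (x : α → ℤ) {s t i : α} (his : i ≠ s) (hit : i ≠ t) :
    exchVec x s t i = x i := by simp [exchVec, his, hit]

lemma count_map_eq_sum (y : α → ℤ) (w : ℤ) :
    Multiset.count w (Finset.univ.val.map y) = ∑ i, if y i = w then 1 else 0 := by
  rw [Multiset.count_map]
  rw [← Finset.filter_val]
  rw [← Finset.card_def, Finset.card_filter]
  exact Finset.sum_congr rfl fun i _ => by
    rcases eq_or_ne (y i) w with h | h
    · simp [h]
    · simp [h, Ne.symm h]

lemma sum_split_two (f : α → ℕ) {s t : α} (hst : s ≠ t) :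
    ∑ i, f i = f s + f t + ∑ i ∈ (Finset.univ.erase s).erase t, f i := by
  rw [← Finset.add_sum_erase _ f (Finset.mem_univ s)]
  rw [← Finset.add_sum_erase _ f (Finset.mem_erase.mpr ⟨Ne.symm hst, Finset.mem_univ t⟩)]
  ring

lemma exchVec_count (x : α → ℤ) {s t : α} (hst : s ≠ t) (w : ℤ) :
    Multiset.count w (Finset.univ.val.map (exchVec x s t))
      + (if x s = w then 1 else 0) + (if x t = w then 1 else 0)
    = Multiset.count w (Finset.univ.val.map x)
      + (if x s - 1 = w then 1 else 0) + (if x t + 1 = w then 1 else 0) := by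
  rw [count_map_eq_sum, count_map_eq_sum]
  rw [sum_split_two (fun i => if exchVec x s t i = w then 1 else 0) hst]
  rw [sum_split_two (fun i => if x i = w then 1 else 0) hst]
  have hsum : ∑ i ∈ (Finset.univ.erase s).erase t, (if exchVec x s t i = w then 1 else 0)
      = ∑ i ∈ (Finset.univ.erase s).erase t, (if x i = w then 1 else 0) := by
    apply Finset.sum_congr rfl
    intro i hi
    have hit : i ≠ t := (Finset.mem_erase.mp hi).1
    have his : i ≠ s := (Finset.mem_erase.mp (Finset.mem_erase.mp hi).2).1
    rw [exchVec_apply x his hit]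
  rw [hsum, exchVec_apply_s x hst, exchVec_apply_t x hst]
  by_cases h1 : x s - 1 = w <;> by_cases h2 : x t + 1 = w <;>
    by_cases h3 : x s = w <;> by_cases h4 : x t = w <;> simp [h1, h2, h3, h4] <;> ring

lemma sortedDesc_exchVec_eq (x : α → ℤ) {s t : α}
    (hst : s ≠ t) (h : x s = x t + 1) :
    sortedDesc (exchVec x s t) = sortedDesc x := by
  apply sortedDesc_eq_of_count
  intro w
  have := exchVec_count x hst w
  have e1 : x s - 1 = x t := by omega
  have e2 : x t + 1 = x s := by omega
  rw [e1, e2] at this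
  omega

lemma sortedDesc_exchVec_lex (x : α → ℤ) {s t : α}
    (hst : s ≠ t) (h : x t + 2 ≤ x s) :
    List.Lex (· < ·) (sortedDesc (exchVec x s t)) (sortedDesc x) := by
  apply lex_of_count (x s) (sortedDesc x) (sortedDesc (exchVec x s t))
    (sortedDesc_sorted x) (sortedDesc_sorted _)
    (by rw [sortedDesc_length, sortedDesc_length])
  · rw [sortedDesc_count, sortedDesc_count]
    have := exchVec_count x hst (x s)
    have e1 : ¬ (x s - 1 = x s) := by omega
    have e2 : ¬ (x t + 1 = x s) := by omega
    have e3 : ¬ (x t = x s) := by omega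
    simp [e1, e2, e3] at this
    omega
  · intro w hw
    rw [sortedDesc_count, sortedDesc_count]
    have := exchVec_count x hst w
    have e1 : ¬ (x s - 1 = w) := by omega
    have e2 : ¬ (x t + 1 = w) := by omega
    have e3 : ¬ (x t = w) := by omega
    have e4 : ¬ (x s = w) := by omega
    simp [e1, e2, e3, e4] at this
    omega

end ExchVec

section Tight

variable [Fintype α] [DecidableEq α] {p : Finset α → ℤ} {m m' : α → ℤ}

lemma tight_inter (hp : Supermodular p) (hm : m ∈ Bdot p) {X Y : Finset α}
    (hX : ∑ i ∈ X, m i = p X) (hY : ∑ i ∈ Y, m i = p Y) :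
    ∑ i ∈ X ∩ Y, m i = p (X ∩ Y) ∧ ∑ i ∈ X ∪ Y, m i = p (X ∪ Y) := by
  have hsum : ∑ i ∈ X ∪ Y, m i + ∑ i ∈ X ∩ Y, m i = ∑ i ∈ X, m i + ∑ i ∈ Y, m i :=
    Finset.sum_union_inter
  have h1 := hm.1 (X ∩ Y)
  have h2 := hm.1 (X ∪ Y)
  have h3 := hp X Y
  omega

/-- The family of `m`-tight sets containing `s`. -/
def tightSets (p : Finset α → ℤ) (m : α → ℤ) (s : α) : Finset (Finset α) :=
  Finset.univ.powerset.filter (fun X => s ∈ X ∧ ∑ i ∈ X, m i = p X)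

lemma univ_mem_tightSets (hm : m ∈ Bdot p) (s : α) : Finset.univ ∈ tightSets p m s := by
  simp [tightSets, hm.2]

/-- The smallest `m`-tight set containing `s`. -/
def minTight (p : Finset α → ℤ) (m : α → ℤ) (s : α) : Finset α :=
  (tightSets p m s).inf id

lemma minTight_subset {s : α} {X : Finset α} (hX : s ∈ X) (ht : ∑ i ∈ X, m i = p X) :
    minTight p m s ⊆ X := by
  apply Finset.inf_le (α := Finset α)
  simp [tightSets, hX, ht]

lemma minTight_mem (hp : Supermodular p) (hm : m ∈ Bdot p) (s : α) :
    s ∈ minTight p m s ∧ ∑ i ∈ minTight p m s, m i = p (minTight p m s) := by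
  have key : ∀ (F : Finset (Finset α)), F.Nonempty → F ⊆ tightSets p m s →
      s ∈ F.inf id ∧ ∑ i ∈ F.inf id, m i = p (F.inf id) := by
    intro F hFne hFsub
    induction hFne using Finset.Nonempty.cons_induction with
    | singleton X =>
      have := hFsub (Finset.mem_singleton_self X)
      simp only [tightSets, Finset.mem_filter] at this
      simpa using this.2
    | cons X F hXF hFne ih =>
      have hsub' : F ⊆ tightSets p m s := fun Y hY => hFsub (Finset.mem_cons_of_mem hY)
      have hX := hFsub (Finset.mem_cons_self X F)
      simp only [tightSets, Finset.mem_filter] at hX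
      obtain ⟨hs', ht'⟩ := ih hsub'
      rw [Finset.inf_cons]
      constructor
      · exact Finset.mem_inter.mpr ⟨hX.2.1, hs'⟩
      · exact (tight_inter hp hm hX.2.2 ht').1
  have hne : (tightSets p m s).Nonempty := ⟨Finset.univ, univ_mem_tightSets hm s⟩
  exact key _ hne (Finset.Subset.refl _)

lemma sum_exchVec {x : α → ℤ} {s t : α} (X : Finset α) :
    ∑ i ∈ X, exchVec x s t i
      = ∑ i ∈ X, x i + (if t ∈ X then 1 else 0) - (if s ∈ X then 1 else 0) := by
  unfold exchVec
  rw [Finset.sum_sub_distrib, Finset.sum_add_distrib]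
  congr 1
  · congr 1
    simp [Finset.sum_ite_eq']
  · simp [Finset.sum_ite_eq']

lemma exchVec_mem_Bdot {s t : α} (hst : s ≠ t) (hm : m ∈ Bdot p)
    (hkey : ∀ X : Finset α, s ∈ X → t ∉ X → ∑ i ∈ X, m i ≠ p X) :
    exchVec m s t ∈ Bdot p := by
  constructor
  · intro X
    rw [sum_exchVec]
    have h1 := hm.1 X
    by_cases hsX : s ∈ X
    · by_cases htX : t ∈ X
      · simp [hsX, htX]; omega
      · have := hkey X hsX htX
        simp [hsX, htX]
        omega
    · by_cases htX : t ∈ X <;> simp [hsX, htX] <;> omega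
  · rw [sum_exchVec]
    simp [hm.2]

/-- Union of a finite family of tight sets is tight. -/
lemma tight_biUnion (hp : Supermodular p) (h0 : p ∅ = 0) (hm : m ∈ Bdot p)
    (C : Finset α) (g : α → Finset α) (hg : ∀ t ∈ C, ∑ i ∈ g t, m i = p (g t)) :
    ∑ i ∈ C.biUnion g, m i = p (C.biUnion g) := by
  induction C using Finset.induction_on with
  | empty => simpa using h0.symm
  | @insert a Cset hnotmem ih =>
    rw [Finset.biUnion_insert]
    exact (tight_inter hp hm (hg a (Finset.mem_insert_self a Cset))
      (ih fun t ht => hg t (Finset.mem_insert_of_mem ht))).2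

/-- The simultaneous exchange lemma for `Bdot p`. -/
lemma bdot_exchange (hp : Supermodular p) (h0 : p ∅ = 0)
    (hm : m ∈ Bdot p) (hm' : m' ∈ Bdot p) {s : α} (hs : m' s < m s) :
    ∃ t, t ≠ s ∧ m t < m' t ∧ exchVec m s t ∈ Bdot p ∧ exchVec m' t s ∈ Bdot p := by
  obtain ⟨hsX0, htX0⟩ := minTight_mem hp hm s
  set X0 := minTight p m s with hX0def
  set C := X0.filter (fun t => t ≠ s ∧ m t < m' t) with hCdef
  by_cases hgood : ∃ t ∈ C, s ∈ minTight p m' t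
  · obtain ⟨t, htC, hsY⟩ := hgood
    rw [hCdef, Finset.mem_filter] at htC
    obtain ⟨htX0', hts, hmt⟩ := htC
    refine ⟨t, hts, hmt, ?_, ?_⟩
    · apply exchVec_mem_Bdot (fun h => hts (h.symm)) hm
      intro X hsX htX htight
      exact htX (minTight_subset hsX htight htX0')
    · apply exchVec_mem_Bdot hts hm'
      intro X htX hsX htight
      exact hsX (minTight_subset htX htight hsY)
  · push_neg at hgood
    exfalso
    set Z := C.biUnion (fun t => minTight p m' t) with hZdef
    have hZtight : ∑ i ∈ Z, m' i = p Z := by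
      apply tight_biUnion hp h0 hm'
      intro t htC
      exact (minTight_mem hp hm' t).2
    have hsZ : s ∉ Z := by
      rw [hZdef]
      intro hmem
      obtain ⟨t, htC, hmem'⟩ := Finset.mem_biUnion.mp hmem
      exact hgood t htC hmem'
    have hpw : ∀ i ∈ X0 \ Z, 0 ≤ m i - m' i := by
      intro i hi
      rcases Finset.mem_sdiff.mp hi with ⟨hiX0, hiZ⟩
      by_cases his : i = s
      · subst his; omega
      · by_contra h
        push_neg at h
        have hiC : i ∈ C := by
          rw [hCdef, Finset.mem_filter]
          exact ⟨hiX0, his, by omega⟩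
        have : i ∈ Z := Finset.mem_biUnion.mpr ⟨i, hiC, (minTight_mem hp hm' i).1⟩
        exact hiZ this
    have hsmem : s ∈ X0 \ Z := Finset.mem_sdiff.mpr ⟨hsX0, hsZ⟩
    have hgap : ∑ i ∈ X0 \ Z, m' i + 1 ≤ ∑ i ∈ X0 \ Z, m i := by
      have h1 : m s - m' s ≤ ∑ i ∈ X0 \ Z, (m i - m' i) :=
        Finset.single_le_sum hpw hsmem
      rw [Finset.sum_sub_distrib] at h1
      omega
    have hZsub : Z ⊆ X0 ∪ Z := Finset.subset_union_right
    have ha : ∑ i ∈ (X0 ∪ Z) \ Z, m' i + ∑ i ∈ Z, m' i = ∑ i ∈ X0 ∪ Z, m' i :=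
      Finset.sum_sdiff hZsub
    have hsd1 : (X0 ∪ Z) \ Z = X0 \ Z := Finset.union_sdiff_right _ _
    have hb : p (X0 ∪ Z) ≤ ∑ i ∈ X0 ∪ Z, m' i := hm'.1 _
    have hc : p X0 + p Z ≤ p (X0 ∩ Z) + p (X0 ∪ Z) := hp X0 Z
    have he : p (X0 ∩ Z) ≤ ∑ i ∈ X0 ∩ Z, m i := hm.1 _
    have hIsub : X0 ∩ Z ⊆ X0 := Finset.inter_subset_left
    have hf : ∑ i ∈ X0 \ (X0 ∩ Z), m i + ∑ i ∈ X0 ∩ Z, m i = ∑ i ∈ X0, m i :=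
      Finset.sum_sdiff hIsub
    have hsd2 : X0 \ (X0 ∩ Z) = X0 \ Z := Finset.sdiff_inter_self_left X0 Z
    rw [hsd1] at ha
    rw [hsd2] at hf
    omega

end Tight

section DecMinFacts

variable [Fintype α] [DecidableEq α] {p : Finset α → ℤ}

lemma bdot_finite (p : Finset α → ℤ) : (Bdot p).Finite := by
  classical
  set lo : α → ℤ := fun i => p {i} with hlo
  set hi : α → ℤ := fun i => p Finset.univ - ∑ u ∈ Finset.univ.erase i, p {u} with hhi
  apply Set.Finite.subset (Set.finite_Icc lo hi)
  intro m hm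
  constructor
  · intro i
    have := hm.1 {i}
    simpa using this
  · intro i
    have h1 : m i + ∑ u ∈ Finset.univ.erase i, m u = ∑ u, m u :=
      Finset.add_sum_erase _ m (Finset.mem_univ i)
    have h2 : ∑ u ∈ Finset.univ.erase i, p {u} ≤ ∑ u ∈ Finset.univ.erase i, m u := by
      apply Finset.sum_le_sum
      intro u _
      simpa using hm.1 {u}
    have h3 := hm.2
    simp only [hhi]
    omega

lemma exists_decMin (p : Finset α → ℤ)
    (hne : (Bdot p).Nonempty) : ∃ m, DecMin p m := by
  classical
  obtain ⟨y0, hy0⟩ := hne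
  have hfin := bdot_finite p
  have hBne : hfin.toFinset.Nonempty := ⟨y0, hfin.mem_toFinset.mpr hy0⟩
  obtain ⟨m0, hm0, hmin⟩ := Finset.exists_min_image hfin.toFinset sortedDesc hBne
  refine ⟨m0, hfin.mem_toFinset.mp hm0, ?_⟩
  intro y hy
  rw [decLE_iff_le]
  exact hmin y (hfin.mem_toFinset.mpr hy)

/-- The key property of dec-min elements: a one-step exchange between two dec-min
elements is forced to be value-tight, and produces another dec-min element. -/
lemma decMin_exchange (hp : Supermodular p) (h0 : p ∅ = 0) {m m' : α → ℤ}
    (hm : DecMin p m) (hm' : DecMin p m') {s : α} (h : m' s < m s) :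
    m s = m' s + 1 ∧ ∃ t, t ≠ s ∧ m t + 1 = m s ∧ m' t = m t + 1 ∧
      DecMin p (exchVec m s t) := by
  obtain ⟨t, hts, hmt, h2, h3⟩ := bdot_exchange hp h0 hm.1 hm'.1 h
  have hst : s ≠ t := fun hh => hts hh.symm
  -- m dec-min forces m s ≤ m t + 1
  have hA : m s ≤ m t + 1 := by
    by_contra hcon
    push_neg at hcon
    have hlex : List.Lex (· < ·) (sortedDesc (exchVec m s t)) (sortedDesc m) :=
      sortedDesc_exchVec_lex m hst (by omega)
    have hle : DecLE m (exchVec m s t) := hm.2 _ h2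
    rw [decLE_iff_le] at hle
    exact absurd hlex (not_lt.mpr hle)
  -- m' dec-min forces m' t ≤ m' s + 1
  have hB : m' t ≤ m' s + 1 := by
    by_contra hcon
    push_neg at hcon
    have hlex : List.Lex (· < ·) (sortedDesc (exchVec m' t s)) (sortedDesc m') :=
      sortedDesc_exchVec_lex m' hts (by omega)
    have hle : DecLE m' (exchVec m' t s) := hm'.2 _ h3
    rw [decLE_iff_le] at hle
    exact absurd hlex (not_lt.mpr hle)
  have heq1 : m s = m' s + 1 := by omega
  have heq2 : m t + 1 = m s := by omega
  have heq3 : m' t = m t + 1 := by omega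
  refine ⟨heq1, t, hts, heq2, heq3, h2, ?_⟩
  intro y hy
  have hsame : sortedDesc (exchVec m s t) = sortedDesc m :=
    sortedDesc_exchVec_eq m hst (by omega)
  have := hm.2 y hy
  rw [decLE_iff_le] at this ⊢
  rw [hsame]
  exact this

end DecMinFacts

/-- The set of dec-min elements of `Ḃ(p)` is a matroidal M-convex set: there are a
matroid `M` on `S` and an integral vector `Δ` such that the dec-min elements are
exactly the vectors `χ_L + Δ` where `L` is a base of `M`. -/
theorem stmt10 [Fintype α] [DecidableEq α] [Nonempty α]
    (p : Finset α → ℤ) (hp : Supermodular p) (h0 : p ∅ = 0)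
    (hne : (Bdot p).Nonempty) :
    ∃ (M : Matroid α) (Δ : α → ℤ), M.E = Set.univ ∧
      ∀ m : α → ℤ, DecMin p m ↔
        ∃ L : Finset α, M.IsBase ↑L ∧
          m = fun s => (if s ∈ L then 1 else 0) + Δ s := by
  classical
  obtain ⟨m₀, hm₀⟩ := exists_decMin p hne
  -- the finite set of dec-min elements
  have hDfin : {m : α → ℤ | DecMin p m}.Finite :=
    (bdot_finite p).subset (fun m hm => hm.1)
  set Dfin : Finset (α → ℤ) := hDfin.toFinset with hDfin_def
  have hmemD : ∀ m : α → ℤ, m ∈ Dfin ↔ DecMin p m := by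
    intro m; rw [hDfin_def, Set.Finite.mem_toFinset]; rfl
  have hDne : Dfin.Nonempty := ⟨m₀, (hmemD m₀).mpr hm₀⟩
  -- Δ s := minimum value of m s over dec-min m
  have hImne : ∀ s : α, (Dfin.image (fun m => m s)).Nonempty := fun s => hDne.image _
  set Δ : α → ℤ := fun s => (Dfin.image (fun m => m s)).min' (hImne s) with hΔdef
  have hlow : ∀ m : α → ℤ, DecMin p m → ∀ s, Δ s ≤ m s := by
    intro m hm s
    exact Finset.min'_le _ _ (Finset.mem_image.mpr ⟨m, (hmemD m).mpr hm, rfl⟩)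
  have hachieve : ∀ s : α, ∃ m : α → ℤ, DecMin p m ∧ m s = Δ s := by
    intro s
    have := Finset.min'_mem (Dfin.image (fun m => m s)) (hImne s)
    obtain ⟨m, hmD, hms⟩ := Finset.mem_image.mp this
    exact ⟨m, (hmemD m).mp hmD, hms⟩
  have hup : ∀ m : α → ℤ, DecMin p m → ∀ s, m s ≤ Δ s + 1 := by
    intro m hm s
    obtain ⟨m₁, hm₁, hm₁s⟩ := hachieve s
    rcases le_or_gt (m s) (m₁ s) with hle | hlt
    · omega
    · have := (decMin_exchange hp h0 hm hm₁ (s := s) (by omega)).1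
      omega
  -- the base family
  set IsB : Set α → Prop := fun L => ∃ m : α → ℤ, DecMin p m ∧ L = {i : α | m i = Δ i + 1}
    with hIsBdef
  have hexists_base : ∃ B, IsB B := ⟨{i : α | m₀ i = Δ i + 1}, m₀, hm₀, rfl⟩
  have hexch : Matroid.ExchangeProperty IsB := by
    intro X Y hX hY a ha
    obtain ⟨m₁, hm₁, rfl⟩ := hX
    obtain ⟨m₂, hm₂, rfl⟩ := hY
    obtain ⟨haX, haY⟩ := ha
    have h1a : m₁ a = Δ a + 1 := haX
    have h2a : m₂ a = Δ a := by
      have h1 := hlow m₂ hm₂ a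
      have h2 := hup m₂ hm₂ a
      have : ¬ (m₂ a = Δ a + 1) := haY
      omega
    obtain ⟨-, t, hta, ht1, ht2, hm₃⟩ :=
      decMin_exchange hp h0 hm₁ hm₂ (show m₂ a < m₁ a by omega)
    -- m₁ t = Δ a, m₂ t = Δ a + 1; deduce Δ t = Δ a
    have hΔt : Δ t = Δ a := by
      have l1 := hlow m₁ hm₁ t
      have u2 := hup m₂ hm₂ t
      omega
    have htX : t ∉ {i : α | m₁ i = Δ i + 1} := by
      intro hmem
      have : m₁ t = Δ t + 1 := hmem
      omega
    have htY : t ∈ {i : α | m₂ i = Δ i + 1} := by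
      show m₂ t = Δ t + 1
      omega
    refine ⟨t, ⟨htY, htX⟩, exchVec m₁ a t, hm₃, ?_⟩
    have hat : a ≠ t := fun hh => hta hh.symm
    ext i
    simp only [Set.mem_insert_iff, Set.mem_diff, Set.mem_singleton_iff, Set.mem_setOf_eq]
    by_cases h1 : i = t
    · rw [h1, exchVec_apply_t m₁ hat]
      constructor
      · intro _; omega
      · intro _; exact Or.inl rfl
    · by_cases h2 : i = a
      · rw [h2, exchVec_apply_s m₁ hat]
        constructor
        · rintro (hh | ⟨-, hh⟩)
          · exact absurd hh hat
          · exact absurd rfl hh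
        · intro hh; exfalso; omega
      · rw [exchVec_apply m₁ h2 h1]
        constructor
        · rintro (hh | ⟨hh, -⟩)
          · exact absurd hh h1
          · exact hh
        · intro hh; exact Or.inr ⟨hh, h2⟩
  set M : Matroid α := Matroid.ofIsBaseOfFinite Set.finite_univ IsB hexists_base hexch
    (fun B _ => Set.subset_univ B) with hMdef
  have hMBase : ∀ B : Set α, M.IsBase B ↔ IsB B := by
    intro B
    rw [hMdef, Matroid.ofIsBaseOfFinite_isBase]
  refine ⟨M, Δ, rfl, ?_⟩
  intro m
  constructor
  · intro hm
    refine ⟨Finset.univ.filter (fun i => m i = Δ i + 1), ?_, ?_⟩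
    · rw [hMBase, hIsBdef]
      refine ⟨m, hm, ?_⟩
      ext i
      simp [Set.mem_setOf_eq]
    · funext s
      by_cases h : m s = Δ s + 1
      · simp [h]
        omega
      · have h1 := hlow m hm s
        have h2 := hup m hm s
        simp [h]
        omega
  · rintro ⟨L, hL, rfl⟩
    rw [hMBase, hIsBdef] at hL
    obtain ⟨m', hm', hLeq⟩ := hL
    have : (fun s => (if s ∈ L then (1:ℤ) else 0) + Δ s) = m' := by
      funext i
      have hiff : i ∈ L ↔ m' i = Δ i + 1 := by
        constructor
        · intro hi
          have : i ∈ {j : α | m' j = Δ j + 1} := by rw [← hLeq]; exact hi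
          exact this
        · intro hi
          have : i ∈ {j : α | m' j = Δ j + 1} := hi
          rw [← hLeq] at this
          exact this
      by_cases h : i ∈ L
      · have := hiff.mp h
        simp [h]
        omega
      · have h1 := hlow m' hm' i
        have h2 := hup m' hm' i
        have : ¬ (m' i = Δ i + 1) := fun hh => h (hiff.mpr hh)
        simp [h]
        omega
    rw [this]
    exact hm'
end

section
/- Let p be an integer-valued supermodular set-function on the subsets of a nonempty finite set S with p(∅) = 0, assume Ḃ(p) is nonempty, and let Φ : ℤ^S → ℝ be a symmetric strictly convex function. Then an element m of Ḃ(p) minimizes Φ over Ḃ(p) if and only if m is a decreasingly minimal element of Ḃ(p). -/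
open Finset

variable {α : Type*}

set_option linter.unusedSectionVars false

namespace DecMinAux

/-! ### Sorted-descending lists of multisets -/

def sd (M : Multiset ℤ) : List ℤ := (M.sort (· ≤ ·)).reverse

lemma sd_cons_of_max (a : ℤ) (M : Multiset ℤ) (h : ∀ x ∈ M, x ≤ a) :
    sd (a ::ₘ M) = a :: sd M := by
  unfold sd
  have hs : Multiset.sort (a ::ₘ M) (· ≤ ·) = Multiset.sort M (· ≤ ·) ++ [a] := by
    refine (fun hp h1 h2 => List.Perm.eq_of_pairwise' (r := (· ≤ · : ℤ → ℤ → Prop)) h1 h2 hp) ?_ ?_ ?_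
    · rw [← Multiset.coe_eq_coe]
      have h1 : (↑(Multiset.sort (a ::ₘ M) (· ≤ ·)) : Multiset ℤ) = a ::ₘ M :=
        Multiset.sort_eq _ _
      have h2 : (↑(Multiset.sort M (· ≤ ·) ++ [a]) : Multiset ℤ) = a ::ₘ M := by
        have h3 : (↑(Multiset.sort M (· ≤ ·) ++ [a]) : Multiset ℤ)
            = (↑(Multiset.sort M (· ≤ ·)) : Multiset ℤ) + ↑([a] : List ℤ) := by
          exact_mod_cast rfl
        rw [h3, Multiset.sort_eq]
        rw [show ((↑([a] : List ℤ)) : Multiset ℤ) = ({a} : Multiset ℤ) from rfl]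
        rw [add_comm, Multiset.singleton_add]
      rw [h1, h2]
    · exact Multiset.pairwise_sort _ _
    · rw [ List.pairwise_append]
      refine ⟨Multiset.pairwise_sort _ _, List.pairwise_singleton _ _, ?_⟩
      intro x hx y hy
      rw [List.mem_singleton] at hy
      subst hy
      exact h x (by rw [← Multiset.mem_sort (r := (· ≤ ·))]; exact hx)
  rw [hs]
  simp

lemma exists_max (M : Multiset ℤ) (h : M ≠ 0) : ∃ a ∈ M, ∀ x ∈ M, x ≤ a := by
  induction M using Multiset.induction with
  | empty => exact absurd rfl h
  | cons a M IH =>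
    by_cases hM : M = 0
    · subst hM; exact ⟨a, by simp⟩
    · obtain ⟨b, hb, hmax⟩ := IH hM
      refine ⟨max a b, ?_, ?_⟩
      · rcases le_total a b with h' | h'
        · simp [max_eq_right h', Multiset.mem_cons, hb]
        · simp [max_eq_left h']
      · intro x hx
        rcases Multiset.mem_cons.1 hx with rfl | hx
        · exact le_max_left _ _
        · exact le_trans (hmax x hx) (le_max_right _ _)

lemma sd_of_ne_zero (M : Multiset ℤ) (h : M ≠ 0) :
    ∃ c ∈ M, (∀ x ∈ M, x ≤ c) ∧ sd M = c :: sd (M.erase c) := by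
  obtain ⟨c, hc, hmax⟩ := exists_max M h
  refine ⟨c, hc, hmax, ?_⟩
  conv_lhs => rw [← Multiset.cons_erase hc]
  exact sd_cons_of_max c _ (fun x hx => hmax x (Multiset.mem_of_mem_erase hx))

lemma sd_lex (R : Multiset ℤ) (a b : ℤ) (h : b + 2 ≤ a) :
    List.Lex (· < ·) (sd ((a-1) ::ₘ (b+1) ::ₘ R)) (sd (a ::ₘ b ::ₘ R)) := by
  induction R using Multiset.strongInductionOn with
  | ih R IH =>
  by_cases hR : ∀ x ∈ R, x ≤ a - 1
  · have h2 : sd (a ::ₘ b ::ₘ R) = a :: sd (b ::ₘ R) := by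
      apply sd_cons_of_max
      intro x hx
      rcases Multiset.mem_cons.1 hx with rfl | hx
      · omega
      · have := hR x hx; omega
    obtain ⟨c, hcmem, hcmax, hc⟩ := sd_of_ne_zero ((a-1) ::ₘ (b+1) ::ₘ R) (by simp)
    have hca : c < a := by
      rcases Multiset.mem_cons.1 hcmem with rfl | hcmem
      · omega
      rcases Multiset.mem_cons.1 hcmem with rfl | hcmem
      · omega
      · have := hR c hcmem; omega
    rw [h2, hc]
    exact List.Lex.rel hca
  · push_neg at hR
    obtain ⟨x, hxR, hxa⟩ := hR
    obtain ⟨c, hcR, hcmax⟩ := exists_max R (by intro h0; subst h0; simp at hxR)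
    have hac : a ≤ c := by have := hcmax x hxR; omega
    set R' := R.erase c with hR'
    have hcons : R = c ::ₘ R' := (Multiset.cons_erase hcR).symm
    have hmem : ∀ y ∈ R', y ≤ c := fun y hy => hcmax y (Multiset.mem_of_mem_erase hy)
    have hL : (a-1) ::ₘ (b+1) ::ₘ R = c ::ₘ ((a-1) ::ₘ (b+1) ::ₘ R') := by
      rw [hcons, Multiset.cons_swap (b+1) c, Multiset.cons_swap (a-1) c]
    have hRt : a ::ₘ b ::ₘ R = c ::ₘ (a ::ₘ b ::ₘ R') := by
      rw [hcons, Multiset.cons_swap b c, Multiset.cons_swap a c]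
    have e1 : sd (c ::ₘ ((a-1) ::ₘ (b+1) ::ₘ R')) = c :: sd ((a-1) ::ₘ (b+1) ::ₘ R') := by
      apply sd_cons_of_max
      intro y hy
      rcases Multiset.mem_cons.1 hy with rfl | hy
      · omega
      rcases Multiset.mem_cons.1 hy with rfl | hy
      · omega
      · exact hmem y hy
    have e2 : sd (c ::ₘ (a ::ₘ b ::ₘ R')) = c :: sd (a ::ₘ b ::ₘ R') := by
      apply sd_cons_of_max
      intro y hy
      rcases Multiset.mem_cons.1 hy with rfl | hy
      · omega
      rcases Multiset.mem_cons.1 hy with rfl | hy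
      · omega
      · exact hmem y hy
    rw [hL, hRt, e1, e2]
    exact List.Lex.cons (IH R' (Multiset.erase_lt.2 hcR))

lemma sd_swap (R : Multiset ℤ) (a b : ℤ) (h : a = b + 1) :
    sd ((a-1) ::ₘ (b+1) ::ₘ R) = sd (a ::ₘ b ::ₘ R) := by
  subst h
  have h1 : (b + 1 - 1) = b := by ring
  rw [h1, Multiset.cons_swap]

/-! ### Vectors, their value multisets, and elementary exchange steps -/

variable [Fintype α] [DecidableEq α]

def vm (x : α → ℤ) : Multiset ℤ := Multiset.map x Finset.univ.val

lemma sortedDesc_eq_sd (x : α → ℤ) : sortedDesc x = sd (vm x) := rfl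

def exch (y : α → ℤ) (s t : α) : α → ℤ :=
  fun u => if u = s then y s - 1 else if u = t then y t + 1 else y u

lemma exch_apply_ne (y : α → ℤ) {s t u : α} (hus : u ≠ s) (hut : u ≠ t) :
    exch y s t u = y u := by simp [exch, hus, hut]

lemma exch_pt (y : α → ℤ) {s t : α} (hst : s ≠ t) (u : α) :
    exch y s t u = y u - (if u = s then 1 else 0) + (if u = t then 1 else 0) := by
  by_cases h1 : u = s
  · subst h1; simp [exch, hst]
  · by_cases h2 : u = t
    · subst h2; simp [exch, h1]
    · simp [exch, h1, h2]

lemma exch_sum (y : α → ℤ) {s t : α} (hst : s ≠ t) (X : Finset α) :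
    ∑ u ∈ X, exch y s t u =
      ∑ u ∈ X, y u - (if s ∈ X then 1 else 0) + (if t ∈ X then 1 else 0) := by
  rw [Finset.sum_congr rfl (fun u _ => exch_pt y hst u)]
  rw [Finset.sum_add_distrib, Finset.sum_sub_distrib]
  rw [Finset.sum_ite_eq' X s (fun _ => (1 : ℤ)), Finset.sum_ite_eq' X t (fun _ => (1 : ℤ))]

lemma exch_mem {p : Finset α → ℤ} {y : α → ℤ} (hy : y ∈ Bdot p) {s t : α} (hst : s ≠ t)
    (hkey : ∀ X : Finset α, s ∈ X → t ∉ X → p X < ∑ u ∈ X, y u) :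
    exch y s t ∈ Bdot p := by
  constructor
  · intro X
    rw [exch_sum y hst X]
    have h1 := hy.1 X
    by_cases hs : s ∈ X <;> by_cases ht : t ∈ X <;> simp [hs, ht]
    · omega
    · have := hkey X hs ht; omega
    · omega
    · omega
  · rw [exch_sum y hst Finset.univ]
    simp [hy.2]

lemma vm_exch (y : α → ℤ) {s t : α} (hst : s ≠ t) :
    ∃ R : Multiset ℤ, vm y = y s ::ₘ y t ::ₘ R ∧
      vm (exch y s t) = (y s - 1) ::ₘ (y t + 1) ::ₘ R := by
  have h1 : Finset.univ.val = s ::ₘ (Finset.univ.erase s).val := by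
    rw [Finset.erase_val]
    exact (Multiset.cons_erase (by simp : s ∈ Finset.univ.val)).symm
  have hts : t ∈ Finset.univ.erase s := Finset.mem_erase.2 ⟨Ne.symm hst, Finset.mem_univ t⟩
  have h2 : (Finset.univ.erase s).val = t ::ₘ ((Finset.univ.erase s).erase t).val := by
    rw [Finset.erase_val (Finset.univ.erase s)]
    exact (Multiset.cons_erase hts).symm
  refine ⟨Multiset.map y ((Finset.univ.erase s).erase t).val, ?_, ?_⟩
  · rw [vm, h1, h2, Multiset.map_cons, Multiset.map_cons]
  · rw [vm, h1, h2, Multiset.map_cons, Multiset.map_cons]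
    have hs : exch y s t s = y s - 1 := by simp [exch]
    have ht : exch y s t t = y t + 1 := by simp [exch, Ne.symm hst, hst]
    rw [hs, ht]
    congr 1
    congr 1
    apply Multiset.map_congr rfl
    intro u hu
    have hu' : u ∈ (Finset.univ.erase s).erase t := hu
    have h3 := Finset.mem_erase.1 hu'
    have h4 := Finset.mem_erase.1 h3.2
    exact exch_apply_ne y h4.1 h3.1

/-! ### Tight sets and the exchange property -/

def Tight (p : Finset α → ℤ) (m : α → ℤ) (X : Finset α) : Prop := ∑ u ∈ X, m u = p X

lemma tight_inter {p : Finset α → ℤ} (hp : Supermodular p) {m : α → ℤ} (hm : m ∈ Bdot p)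
    {X Y : Finset α} (hX : Tight p m X) (hY : Tight p m Y) : Tight p m (X ∩ Y) := by
  have h1 := hp X Y
  have h2 := hm.1 (X ∩ Y)
  have h3 := hm.1 (X ∪ Y)
  have h4 : ∑ u ∈ X ∪ Y, m u + ∑ u ∈ X ∩ Y, m u = ∑ u ∈ X, m u + ∑ u ∈ Y, m u :=
    Finset.sum_union_inter
  unfold Tight at *
  omega

lemma tight_min {p : Finset α → ℤ} (hp : Supermodular p) {m : α → ℤ} (hm : m ∈ Bdot p) (s : α) :
    ∃ T : Finset α, Tight p m T ∧ s ∈ T ∧ ∀ X : Finset α, Tight p m X → s ∈ X → T ⊆ X := by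
  classical
  set F := Finset.univ.powerset.filter (fun X => (∑ u ∈ X, m u = p X) ∧ s ∈ X) with hF
  have huniv : Finset.univ ∈ F := by
    simp [hF, Finset.mem_filter, hm.2, Tight]
  obtain ⟨T, hTF, hTmin⟩ := Finset.exists_min_image F Finset.card ⟨_, huniv⟩
  have hTt : Tight p m T := (Finset.mem_filter.1 hTF).2.1
  have hTs : s ∈ T := (Finset.mem_filter.1 hTF).2.2
  refine ⟨T, hTt, hTs, ?_⟩
  intro X hX hsX
  have hTX : Tight p m (T ∩ X) := tight_inter hp hm hTt hX
  have hmemF : T ∩ X ∈ F := by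
    simp only [hF, Finset.mem_filter, Finset.mem_powerset]
    exact ⟨Finset.subset_univ _, hTX, Finset.mem_inter.2 ⟨hTs, hsX⟩⟩
  have hcard := hTmin _ hmemF
  have heq : T ∩ X = T :=
    Finset.eq_of_subset_of_card_le Finset.inter_subset_left hcard
  intro u hu
  rw [← heq] at hu
  exact (Finset.mem_inter.1 hu).2

lemma exchange {p : Finset α → ℤ} (hp : Supermodular p) {a b : α → ℤ}
    (ha : a ∈ Bdot p) (hb : b ∈ Bdot p) {s : α} (hs : b s < a s) :
    ∃ t, t ≠ s ∧ a t < b t ∧ exch a s t ∈ Bdot p := by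
  obtain ⟨T, hT, hsT, hTmin⟩ := tight_min hp ha s
  have hbT : p T ≤ ∑ u ∈ T, b u := hb.1 T
  have hab : ∑ u ∈ T, a u ≤ ∑ u ∈ T, b u := by rw [hT]; exact hbT
  have hex : ∃ t ∈ T.erase s, a t < b t := by
    by_contra hc
    push_neg at hc
    have h1 : ∑ u ∈ T.erase s, b u ≤ ∑ u ∈ T.erase s, a u :=
      Finset.sum_le_sum hc
    have h2 : a s + ∑ u ∈ T.erase s, a u = ∑ u ∈ T, a u :=
      Finset.add_sum_erase T a hsT
    have h3 : b s + ∑ u ∈ T.erase s, b u = ∑ u ∈ T, b u :=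
      Finset.add_sum_erase T b hsT
    omega
  obtain ⟨t, htT, htab⟩ := hex
  have hts : t ≠ s := Finset.ne_of_mem_erase htT
  refine ⟨t, hts, htab, ?_⟩
  apply exch_mem ha (Ne.symm hts)
  intro X hsX htX
  rcases lt_or_eq_of_le (ha.1 X) with h | h
  · exact h
  · exfalso
    have hTsub : T ⊆ X := hTmin X h.symm hsX
    exact htX (hTsub (Finset.mem_of_mem_erase htT))

lemma exch_dist {m y : α → ℤ} {s t : α} (hst : s ≠ t)
    (hs : m s < y s) (ht : y t < m t) :
    (∑ u, ((exch y s t) u - m u).natAbs) + 2 = ∑ u, (y u - m u).natAbs := by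
  have hts : t ∈ Finset.univ.erase s := Finset.mem_erase.2 ⟨Ne.symm hst, Finset.mem_univ t⟩
  have split : ∀ z : α → ℤ, ∑ u, (z u - m u).natAbs
      = (z s - m s).natAbs + ((z t - m t).natAbs
        + ∑ u ∈ (Finset.univ.erase s).erase t, (z u - m u).natAbs) := by
    intro z
    rw [← Finset.add_sum_erase _ _ (Finset.mem_univ s), ← Finset.add_sum_erase _ _ hts]
  rw [split, split]
  have hrest : ∑ u ∈ (Finset.univ.erase s).erase t, ((exch y s t) u - m u).natAbs
      = ∑ u ∈ (Finset.univ.erase s).erase t, (y u - m u).natAbs := by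
    apply Finset.sum_congr rfl
    intro u hu
    have h3 := Finset.mem_erase.1 hu
    have h4 := Finset.mem_erase.1 h3.2
    rw [exch_apply_ne y h4.1 h3.1]
  rw [hrest]
  have e1 : exch y s t s = y s - 1 := by simp [exch]
  have e2 : exch y s t t = y t + 1 := by simp [exch, hst, Ne.symm hst]
  rw [e1, e2]
  omega

/-! ### Local optimality implies dec-minimality -/

lemma L_implies_decmin {p : Finset α → ℤ} (hp : Supermodular p) {m : α → ℤ} (hm : m ∈ Bdot p)
    (hL : ∀ s t : α, m t + 2 ≤ m s → exch m s t ∉ Bdot p) :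
    ∀ y ∈ Bdot p, ¬ List.Lex (· < ·) (sd (vm y)) (sd (vm m)) := by
  suffices H : ∀ d : ℕ, ∀ y ∈ Bdot p, (∑ u, (y u - m u).natAbs) = d →
      ¬ List.Lex (· < ·) (sd (vm y)) (sd (vm m)) by
    intro y hy
    exact H _ y hy rfl
  intro d
  induction d using Nat.strong_induction_on with
  | _ d IH =>
  intro y hy hd hlex
  have hym : y ≠ m := by
    rintro rfl
    exact irrefl_of (List.Lex (· < ·)) _ hlex
  have hex : ∃ u, m u < y u := by
    by_contra hc
    push_neg at hc
    have hne : ∃ u, y u < m u := by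
      by_contra hc2
      push_neg at hc2
      exact hym (funext fun u => le_antisymm (hc u) (hc2 u))
    obtain ⟨u0, hu0⟩ := hne
    have hlt : ∑ u, y u < ∑ u, m u :=
      Finset.sum_lt_sum (fun i _ => hc i) ⟨u0, Finset.mem_univ u0, hu0⟩
    rw [hy.2, hm.2] at hlt
    exact lt_irrefl _ hlt
  obtain ⟨s0, hs0⟩ := hex
  set Splus := Finset.univ.filter (fun u => m u < y u) with hSplus
  have hs0S : s0 ∈ Splus := by simp [hSplus, hs0]
  obtain ⟨s, hsS, hsmax⟩ := Finset.exists_max_image Splus y ⟨s0, hs0S⟩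
  have hsmy : m s < y s := (Finset.mem_filter.1 hsS).2
  obtain ⟨t, hts, hty, hmem⟩ := exchange hp hy hm hsmy
  have hstne : s ≠ t := fun h => by rw [h] at hsmy; omega
  obtain ⟨R, hRy, hRy'⟩ := vm_exch y hstne
  have hdist := exch_dist hstne hsmy hty
  rcases lt_trichotomy (y t + 1) (y s) with hc | hc | hc
  · have hlex1 : List.Lex (· < ·) (sd (vm (exch y s t))) (sd (vm y)) := by
      rw [hRy, hRy']
      exact sd_lex R (y s) (y t) (by omega)
    haveI : IsTrans (List ℤ) (List.Lex (· < · : ℤ → ℤ → Prop)) :=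
      (isStrictWeakOrder_of_isOrderConnected : IsStrictWeakOrder (List ℤ) (List.Lex (· < ·))).toIsTrans
    have hlex2 := _root_.trans hlex1 hlex
    exact IH (d - 2) (by omega) _ hmem (by omega) hlex2
  · have hvm : sd (vm (exch y s t)) = sd (vm y) := by
      rw [hRy, hRy']
      exact sd_swap R (y s) (y t) hc.symm
    exact IH (d - 2) (by omega) _ hmem (by omega) (hvm ▸ hlex)
  · obtain ⟨u, hut, huy, hmem'⟩ := exchange hp hm hy hty
    have huS : u ∈ Splus := by simp [hSplus, huy]
    have h5 := hsmax u huS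
    exact hL t u (by omega) hmem'

/-! ### Finiteness of `Bdot p` -/

lemma bdot_finite (p : Finset α → ℤ) : (Bdot p).Finite := by
  apply Set.Finite.subset
    (Set.Finite.pi (fun s : α =>
      Set.finite_Icc (p {s}) (p Finset.univ - p (Finset.univ.erase s))))
  intro y hy
  rw [Set.mem_pi]
  intro s _
  rw [Set.mem_Icc]
  constructor
  · have h1 := hy.1 {s}
    simpa using h1
  · have h1 := hy.1 (Finset.univ.erase s)
    have h2 : y s + ∑ u ∈ Finset.univ.erase s, y u = ∑ u, y u :=
      Finset.add_sum_erase _ _ (Finset.mem_univ s)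
    have h3 := hy.2
    omega

/-! ### Equal value multisets give a permutation -/

lemma exists_perm_of_vm_eq {x y : α → ℤ} (h : vm x = vm y) :
    ∃ σ : Equiv.Perm α, y ∘ σ = x := by
  classical
  let e := Fintype.equivFin α
  have hofn : ∀ z : α → ℤ, (↑(List.ofFn (z ∘ e.symm)) : Multiset ℤ) = vm z := by
    intro z
    rw [← Fin.univ_val_map]
    show Multiset.map (z ∘ e.symm) Finset.univ.val = vm z
    rw [← Multiset.map_map]
    congr 1
    have hmu := Finset.map_univ_equiv e.symm
    calc Multiset.map e.symm Finset.univ.val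
        = Multiset.map e.symm.toEmbedding Finset.univ.val := rfl
      _ = (Finset.univ.map e.symm.toEmbedding).val := by rw [Finset.map_val]
      _ = Finset.univ.val := by rw [hmu]
  set f : Fin (Fintype.card α) → ℤ := x ∘ e.symm with hf
  set g : Fin (Fintype.card α) → ℤ := y ∘ e.symm with hg
  have hperm : (List.ofFn f).Perm (List.ofFn g) := by
    rw [← Multiset.coe_eq_coe, hofn, hofn, h]
  set σf := Tuple.sort f with hσf
  set σg := Tuple.sort g with hσg
  have heq : f ∘ σf = g ∘ σg := by
    apply List.ofFn_injective
    refine (fun hp h1 h2 => List.Perm.eq_of_pairwise' (r := (· ≤ · : ℤ → ℤ → Prop)) h1 h2 hp) ?_ ?_ ?_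
    · exact ((σf.ofFn_comp_perm f).trans hperm).trans (σg.ofFn_comp_perm g).symm
    · exact (Tuple.monotone_sort f).sortedLE_ofFn.pairwise
    · exact (Tuple.monotone_sort g).sortedLE_ofFn.pairwise
  refine ⟨((e.trans σf.symm).trans σg).trans e.symm, ?_⟩
  funext a
  have h1 : f (σf (σf.symm (e a))) = g (σg (σf.symm (e a))) := congrFun heq (σf.symm (e a))
  simp only [Equiv.apply_symm_apply] at h1
  show y (e.symm (σg (σf.symm (e a)))) = x a
  have h2 : g (σg (σf.symm (e a))) = y (e.symm (σg (σf.symm (e a)))) := rfl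
  have h3 : f (e a) = x a := by simp [hf]
  rw [← h2, ← h1]
  simpa using h3

/-! ### Strict convexity kills 1-tightening steps -/

lemma phimin_L {p : Finset α → ℤ} (Φ : (α → ℤ) → ℝ)
    (hsym : ∀ (z : α → ℤ) (σ : Equiv.Perm α), Φ (z ∘ σ) = Φ z)
    (hconv : ∀ (x y : α → ℤ), x ≠ y → ∀ (lam : ℝ), 0 < lam → lam < 1 →
      ∀ w : α → ℤ, (∀ s : α, (w s : ℝ) = lam * (x s : ℝ) + (1 - lam) * (y s : ℝ)) →
        Φ w < lam * Φ x + (1 - lam) * Φ y)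
    {m : α → ℤ} (hmin : ∀ y ∈ Bdot p, Φ m ≤ Φ y) :
    ∀ s t : α, m t + 2 ≤ m s → exch m s t ∉ Bdot p := by
  intro s t hgap hmem
  set d : ℤ := m s - m t with hd
  have hd2 : 2 ≤ d := by omega
  have hdR : (2:ℝ) ≤ (d:ℝ) := by exact_mod_cast hd2
  have hd0 : (0:ℝ) < (d:ℝ) := by linarith
  set lam : ℝ := 1 / (d:ℝ) with hlam
  have hlam0 : 0 < lam := by positivity
  have hlam1 : lam < 1 := by rw [hlam, div_lt_one hd0]; linarith
  have hstne : s ≠ t := by intro h; rw [h] at hgap; omega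
  set m2 : α → ℤ := m ∘ (Equiv.swap s t) with hm2
  have hm2s : m2 s = m t := by simp [hm2, Equiv.swap_apply_left]
  have hm2t : m2 t = m s := by simp [hm2, Equiv.swap_apply_right]
  have hxy : m2 ≠ m := by
    intro h
    have h1 := congrFun h s
    rw [hm2s] at h1
    omega
  have hdc : (d:ℝ) = (m s : ℝ) - (m t : ℝ) := by rw [hd]; push_cast; ring
  have hld : lam * ((m s : ℝ) - (m t : ℝ)) = 1 := by
    rw [← hdc, hlam]
    field_simp
  have key := hconv m2 m hxy lam hlam0 hlam1 (exch m s t) ?_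
  · have hΦ2 : Φ m2 = Φ m := hsym m (Equiv.swap s t)
    rw [hΦ2] at key
    have hlt : Φ (exch m s t) < Φ m := by
      have hr : lam * Φ m + (1 - lam) * Φ m = Φ m := by ring
      linarith [key, hr]
    exact absurd (hmin _ hmem) (not_le.2 hlt)
  · intro u
    by_cases h1 : u = s
    · have e1 : exch m s t s = m s - 1 := by simp [exch]
      rw [h1, e1, hm2s]
      push_cast
      linear_combination hld
    · by_cases h2 : u = t
      · have e2 : exch m s t t = m t + 1 := by simp [exch, hstne, Ne.symm hstne]
        rw [h2, e2, hm2t]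
        push_cast
        linear_combination (-1 : ℝ) * hld
      · rw [exch_apply_ne m h1 h2]
        have e3 : m2 u = m u := by
          simp [hm2, Equiv.swap_apply_of_ne_of_ne h1 h2]
        rw [e3]
        ring

end DecMinAux

/-- For a symmetric strictly convex function `Φ : ℤ^S → ℝ`, an element of `Ḃ(p)`
minimizes `Φ` over `Ḃ(p)` iff it is a dec-min element of `Ḃ(p)`. -/
theorem stmt12 [Fintype α] [DecidableEq α] [Nonempty α]
    (p : Finset α → ℤ) (hp : Supermodular p) (h0 : p ∅ = 0)
    (hne : (Bdot p).Nonempty)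
    (Φ : (α → ℤ) → ℝ)
    (hsym : ∀ (z : α → ℤ) (σ : Equiv.Perm α), Φ (z ∘ σ) = Φ z)
    (hconv : ∀ (x y : α → ℤ), x ≠ y → ∀ (lam : ℝ), 0 < lam → lam < 1 →
      ∀ w : α → ℤ, (∀ s : α, (w s : ℝ) = lam * (x s : ℝ) + (1 - lam) * (y s : ℝ)) →
        Φ w < lam * Φ x + (1 - lam) * Φ y)
    (m : α → ℤ) (hm : m ∈ Bdot p) :
    (∀ y ∈ Bdot p, Φ m ≤ Φ y) ↔ (∀ y ∈ Bdot p, DecLE m y) := by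
  classical
  constructor
  · intro hmin y hy
    have hL := DecMinAux.phimin_L Φ hsym hconv hmin
    have hnd := DecMinAux.L_implies_decmin hp hm hL
    haveI : IsTrichotomous (List ℤ) (List.Lex (· < · : ℤ → ℤ → Prop)) := inferInstance
    rcases trichotomous_of (List.Lex (· < · : ℤ → ℤ → Prop)) (sortedDesc m) (sortedDesc y)
      with h | h | h
    · exact Or.inr h
    · exact Or.inl h
    · exact absurd (by rw [DecMinAux.sortedDesc_eq_sd, DecMinAux.sortedDesc_eq_sd] at h; exact h)
        (hnd y hy)
  · intro hdec y hy
    obtain ⟨m', hm'B, hm'min⟩ := Set.exists_min_image (Bdot p) Φ (DecMinAux.bdot_finite p) hne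
    have hL' := DecMinAux.phimin_L Φ hsym hconv hm'min
    have hnd' := DecMinAux.L_implies_decmin hp hm'B hL'
    have h1 : ¬ List.Lex (· < ·) (sortedDesc m) (sortedDesc m') := by
      have := hnd' m hm
      rw [← DecMinAux.sortedDesc_eq_sd, ← DecMinAux.sortedDesc_eq_sd] at this
      exact this
    have heq : sortedDesc m = sortedDesc m' := by
      rcases hdec m' hm'B with h | h
      · exact h
      · exact absurd h h1
    have hvm : DecMinAux.vm m = DecMinAux.vm m' := by
      have hsorts : (DecMinAux.vm m).sort (· ≤ ·) = (DecMinAux.vm m').sort (· ≤ ·) :=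
        List.reverse_injective heq
      calc DecMinAux.vm m = ↑((DecMinAux.vm m).sort (· ≤ ·)) := (Multiset.sort_eq _ _).symm
        _ = ↑((DecMinAux.vm m').sort (· ≤ ·)) := by rw [hsorts]
        _ = DecMinAux.vm m' := Multiset.sort_eq _ _
    obtain ⟨σ, hσ⟩ := DecMinAux.exists_perm_of_vm_eq hvm
    have hΦeq : Φ m = Φ m' := by rw [← hσ]; exact hsym m' σ
    rw [hΦeq]
    exact hm'min y hy
end

section
/- Let p be an integer-valued supermodular set-function on the subsets of a nonempty finite set S with p(∅) = 0, and assume Ḃ(p) is nonempty. Then an element m of Ḃ(p) minimizes the square-sum W(z) = Σ_{s ∈ S} z(s)² over Ḃ(p) if and only if m is a decreasingly minimal element of Ḃ(p). -/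
open Finset

variable {α : Type*}

/-! ### Auxiliary machinery -/

set_option linter.unusedSectionVars false

/-! #### Descending sorted lists of multisets -/

def dList (M : Multiset ℤ) : List ℤ := (M.sort (· ≤ ·)).reverse

lemma dList_sorted (M : Multiset ℤ) : (dList M).Pairwise (· ≥ ·) := by
  unfold dList
  rw [List.pairwise_reverse]
  show (M.sort (· ≤ ·)).Pairwise (· ≤ ·)
  exact M.pairwise_sort _

lemma dList_coe (M : Multiset ℤ) : (dList M : Multiset ℤ) = M := by
  unfold dList
  rw [Multiset.coe_reverse, Multiset.sort_eq]

lemma dList_unique {M : Multiset ℤ} {l : List ℤ} (hs : l.Pairwise (· ≥ ·))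
    (hl : (l : Multiset ℤ) = M) : dList M = l := by
  refine List.Perm.eq_of_pairwise' (dList_sorted M) hs ?_
  rw [← Multiset.coe_eq_coe, dList_coe, hl]

lemma mem_dList {M : Multiset ℤ} {b : ℤ} : b ∈ dList M ↔ b ∈ M := by
  rw [← Multiset.mem_coe, dList_coe]

lemma exists_max {N : Multiset ℤ} (hN : N ≠ 0) : ∃ c ∈ N, ∀ b ∈ N, b ≤ c := by
  induction N using Multiset.induction_on with
  | empty => exact absurd rfl hN
  | cons a N' ih =>
    by_cases h' : N' = 0
    · subst h'
      exact ⟨a, Multiset.mem_cons_self a 0, by intro b hb; simp at hb; omega⟩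
    · obtain ⟨c, hc, hcmax⟩ := ih h'
      refine ⟨max a c, ?_, ?_⟩
      · rcases le_total a c with h | h
        · rw [max_eq_right h]; exact Multiset.mem_cons_of_mem hc
        · rw [max_eq_left h]; exact Multiset.mem_cons_self a N'
      · intro b hb
        rcases Multiset.mem_cons.mp hb with rfl | hb
        · exact le_max_left _ _
        · exact le_trans (hcmax b hb) (le_max_right _ _)

lemma dList_cons_max {M : Multiset ℤ} {a : ℤ} (ha : a ∈ M) (hmax : ∀ b ∈ M, b ≤ a) :
    dList M = a :: dList (M.erase a) := by
  apply dList_unique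
  · rw [List.pairwise_cons]
    refine ⟨?_, dList_sorted _⟩
    intro b hb
    exact hmax b (Multiset.mem_of_mem_erase (mem_dList.mp hb))
  · rw [← Multiset.cons_coe, dList_coe, Multiset.cons_erase ha]

lemma swap_lex_aux (n : ℕ) : ∀ (N : Multiset ℤ), Multiset.card N = n → ∀ a b : ℤ, b + 2 ≤ a →
    List.Lex (· < ·) (dList ((a-1) ::ₘ (b+1) ::ₘ N)) (dList (a ::ₘ b ::ₘ N)) := by
  induction n using Nat.strong_induction_on with
  | _ n ih =>
    intro N hN a b hab
    by_cases hc : ∃ c ∈ N, a ≤ c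
    · -- max of N dominates
      have hN0 : N ≠ 0 := by
        rintro rfl
        obtain ⟨c, hc, _⟩ := hc
        simp at hc
      obtain ⟨c, hcN, hcmax⟩ := exists_max hN0
      have hac : a ≤ c := by obtain ⟨c', hc', h'⟩ := hc; exact le_trans h' (hcmax c' hc')
      have h1 : dList (a ::ₘ b ::ₘ N) = c :: dList (a ::ₘ b ::ₘ N.erase c) := by
        rw [show a ::ₘ b ::ₘ N = c ::ₘ (a ::ₘ b ::ₘ N.erase c) by
          rw [Multiset.cons_swap c a, Multiset.cons_swap c b, Multiset.cons_erase hcN]]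
        refine (dList_cons_max (Multiset.mem_cons_self c _) ?_).trans
          (by rw [Multiset.erase_cons_head])
        intro x hx
        rcases Multiset.mem_cons.mp hx with rfl | hx
        · rfl
        rcases Multiset.mem_cons.mp hx with rfl | hx
        · exact hac
        rcases Multiset.mem_cons.mp hx with rfl | hx
        · omega
        · exact hcmax x (Multiset.mem_of_mem_erase hx)
      have h2 : dList ((a-1) ::ₘ (b+1) ::ₘ N) = c :: dList ((a-1) ::ₘ (b+1) ::ₘ N.erase c) := by
        rw [show (a-1) ::ₘ (b+1) ::ₘ N = c ::ₘ ((a-1) ::ₘ (b+1) ::ₘ N.erase c) by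
          rw [Multiset.cons_swap c (a-1), Multiset.cons_swap c (b+1), Multiset.cons_erase hcN]]
        refine (dList_cons_max (Multiset.mem_cons_self c _) ?_).trans
          (by rw [Multiset.erase_cons_head])
        intro x hx
        rcases Multiset.mem_cons.mp hx with rfl | hx
        · rfl
        rcases Multiset.mem_cons.mp hx with rfl | hx
        · omega
        rcases Multiset.mem_cons.mp hx with rfl | hx
        · omega
        · exact hcmax x (Multiset.mem_of_mem_erase hx)
      rw [h1, h2]
      apply List.Lex.cons
      have hcard : Multiset.card (N.erase c) < n := by
        rw [Multiset.card_erase_of_mem hcN, hN]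
        have h0 : 0 < n := hN ▸ Multiset.card_pos.mpr hN0
        exact Nat.pred_lt (by omega)
      exact ih _ hcard _ rfl a b hab
    · push_neg at hc
      have h1 : dList (a ::ₘ b ::ₘ N) = a :: dList (b ::ₘ N) := by
        have := dList_cons_max (M := a ::ₘ b ::ₘ N) (a := a) (Multiset.mem_cons_self a _) ?_
        · rwa [Multiset.erase_cons_head] at this
        · intro x hx
          rcases Multiset.mem_cons.mp hx with rfl | hx
          · rfl
          rcases Multiset.mem_cons.mp hx with rfl | hx
          · omega
          · exact le_of_lt (hc x hx)
      have hM2 : ((a-1) ::ₘ (b+1) ::ₘ N) ≠ 0 := by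
        intro h
        exact Multiset.cons_ne_zero h
      obtain ⟨c2, hc2, hc2max⟩ := exists_max hM2
      have h2 : dList ((a-1) ::ₘ (b+1) ::ₘ N) = c2 :: dList (((a-1) ::ₘ (b+1) ::ₘ N).erase c2) :=
        dList_cons_max hc2 hc2max
      have hc2a : c2 < a := by
        rcases Multiset.mem_cons.mp hc2 with rfl | hx
        · omega
        rcases Multiset.mem_cons.mp hx with rfl | hx
        · omega
        · exact hc _ hx
      rw [h1, h2]
      exact List.Lex.rel hc2a

lemma swap_lex (N : Multiset ℤ) {a b : ℤ} (h : b + 2 ≤ a) :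
    List.Lex (· < ·) (dList ((a-1) ::ₘ (b+1) ::ₘ N)) (dList (a ::ₘ b ::ₘ N)) :=
  swap_lex_aux (Multiset.card N) N rfl a b h

/-! #### The elementary move and its effect on sums, squares and sorted lists -/

section MoveLemmas

variable [Fintype α] [DecidableEq α]

/-- Increase `m` by one at `s` and decrease it by one at `t`. -/
def move (m : α → ℤ) (s t : α) : α → ℤ :=
  fun u => m u + (if u = s then 1 else 0) - (if u = t then 1 else 0)

lemma move_apply_s {m : α → ℤ} {s t : α} (hst : s ≠ t) : move m s t s = m s + 1 := by
  simp [move, hst]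

lemma move_apply_t {m : α → ℤ} {s t : α} (hst : s ≠ t) : move m s t t = m t - 1 := by
  simp [move, Ne.symm hst]

lemma move_apply {m : α → ℤ} {s t u : α} (hus : u ≠ s) (hut : u ≠ t) : move m s t u = m u := by
  simp [move, hus, hut]

lemma sum_move (m : α → ℤ) (s t : α) (X : Finset α) :
    ∑ u ∈ X, move m s t u
      = ∑ u ∈ X, m u + (if s ∈ X then 1 else 0) - (if t ∈ X then 1 else 0) := by
  simp [move, Finset.sum_add_distrib, Finset.sum_sub_distrib, Finset.sum_ite_eq']

lemma sum_split {β : Type*} [AddCommMonoid β] {s t : α} (hst : s ≠ t) (h : α → β) :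
    ∑ u, h u = h s + h t + ∑ u ∈ (univ.erase s).erase t, h u := by
  rw [← Finset.add_sum_erase _ h (mem_univ s),
      ← Finset.add_sum_erase _ h (Finset.mem_erase.mpr ⟨Ne.symm hst, mem_univ t⟩), add_assoc]

lemma sum_sq_move (m : α → ℤ) {s t : α} (hst : s ≠ t) :
    ∑ u, (move m s t u)^2 = ∑ u, (m u)^2 + 2*(m s) - 2*(m t) + 2 := by
  rw [sum_split hst (fun u => (move m s t u)^2), sum_split hst (fun u => (m u)^2)]
  have hrest : ∑ u ∈ (univ.erase s).erase t, (move m s t u)^2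
      = ∑ u ∈ (univ.erase s).erase t, (m u)^2 := by
    apply Finset.sum_congr rfl
    intro u hu
    rw [move_apply (Finset.ne_of_mem_erase (Finset.mem_of_mem_erase hu))
      (Finset.ne_of_mem_erase hu)]
  rw [hrest, move_apply_s hst, move_apply_t hst]
  ring

lemma map_univ_decomp (f : α → ℤ) {s t : α} (hst : s ≠ t) :
    Finset.univ.val.map f
      = f s ::ₘ f t ::ₘ (((univ.erase s).erase t).val.map f) := by
  have h1 : ((univ.erase s).erase t).val = (univ.val.erase s).erase t := by
    simp [Finset.erase_val]
  have h2 : t ∈ Multiset.erase univ.val s := by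
    rw [Multiset.mem_erase_of_ne hst.symm]
    exact Finset.mem_val.mpr (mem_univ t)
  have h3 : s ∈ Finset.univ.val := Finset.mem_val.mpr (mem_univ s)
  calc Finset.univ.val.map f = (s ::ₘ Multiset.erase univ.val s).map f := by
        rw [Multiset.cons_erase h3]
    _ = f s ::ₘ (Multiset.erase univ.val s).map f := Multiset.map_cons f _ _
    _ = f s ::ₘ ((t ::ₘ (Multiset.erase univ.val s).erase t).map f) := by
        rw [Multiset.cons_erase h2]
    _ = f s ::ₘ f t ::ₘ (((univ.erase s).erase t).val.map f) := by
        rw [Multiset.map_cons, h1]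

lemma map_move {m : α → ℤ} {s t : α} (hst : s ≠ t) :
    Finset.univ.val.map (move m s t)
      = (m s + 1) ::ₘ (m t - 1) ::ₘ (((univ.erase s).erase t).val.map m) := by
  rw [map_univ_decomp (move m s t) hst, move_apply_s hst, move_apply_t hst]
  congr 2
  apply Multiset.map_congr rfl
  intro u hu
  have hu' : u ∈ (univ.erase s).erase t := hu
  exact move_apply (Finset.ne_of_mem_erase (Finset.mem_of_mem_erase hu'))
    (Finset.ne_of_mem_erase hu')

lemma sortedDesc_eq_dList (x : α → ℤ) : sortedDesc x = dList (Finset.univ.val.map x) := rfl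

lemma map_move_eq {m : α → ℤ} {s t : α} (hst : s ≠ t) (h : m s + 1 = m t) :
    Finset.univ.val.map (move m s t) = Finset.univ.val.map m := by
  rw [map_move hst, map_univ_decomp m hst]
  rw [show m s + 1 = m t from h, show m t - 1 = m s by omega]
  exact Multiset.cons_swap _ _ _

lemma lex_move {m : α → ℤ} {s t : α} (hst : s ≠ t) (h : m s + 2 ≤ m t) :
    List.Lex (· < ·) (sortedDesc (move m s t)) (sortedDesc m) := by
  rw [sortedDesc_eq_dList, sortedDesc_eq_dList, map_move hst, map_univ_decomp m hst]
  rw [Multiset.cons_swap (m s + 1) (m t - 1), Multiset.cons_swap (m s) (m t)]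
  exact swap_lex _ h

lemma sum_comp_eq {x y : α → ℤ} (h : Finset.univ.val.map x = Finset.univ.val.map y)
    (g : ℤ → ℤ) : ∑ u, g (x u) = ∑ u, g (y u) := by
  have e1 : ∑ u, g (x u) = ((Finset.univ.val.map x).map g).sum := by
    rw [Multiset.map_map]; rfl
  have e2 : ∑ u, g (y u) = ((Finset.univ.val.map y).map g).sum := by
    rw [Multiset.map_map]; rfl
  rw [e1, e2, h]

lemma decLE_trans {x y z : α → ℤ} (h1 : DecLE x y) (h2 : DecLE y z) : DecLE x z := by
  rcases h1 with h1 | h1 <;> rcases h2 with h2 | h2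
  · exact Or.inl (h1.trans h2)
  · exact Or.inr (h1 ▸ h2)
  · exact Or.inr (h2 ▸ h1)
  · exact Or.inr (List.lex_trans lt_trans h1 h2)

end MoveLemmas

/-! #### The exchange lemma -/

lemma exchange [Fintype α] [DecidableEq α] {p : Finset α → ℤ} (hp : Supermodular p)
    {m y : α → ℤ}
    (hm : m ∈ Bdot p) (hy : y ∈ Bdot p) {s : α} (hs : y s < m s) :
    ∃ t, m t < y t ∧ move m t s ∈ Bdot p := by
  obtain ⟨hm1, hm2⟩ := hm
  obtain ⟨hy1, hy2⟩ := hy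
  classical
  set T : Finset (Finset α) :=
    Finset.univ.powerset.filter (fun X => s ∈ X ∧ ∑ u ∈ X, m u = p X) with hT
  have hTuniv : (Finset.univ : Finset α) ∈ T := by
    simp only [hT, Finset.mem_filter, Finset.mem_powerset]
    exact ⟨Finset.Subset.refl _, Finset.mem_univ s, hm2⟩
  obtain ⟨F, hF, hFmin⟩ := Finset.exists_min_image T Finset.card ⟨_, hTuniv⟩
  simp only [hT, Finset.mem_filter, Finset.mem_powerset] at hF
  obtain ⟨-, hsF, hFt⟩ := hF
  have hsub : ∀ X : Finset α, s ∈ X → ∑ u ∈ X, m u = p X → F ⊆ X := by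
    intro X hsX hXt
    have h1 : ∑ u ∈ F ∪ X, m u + ∑ u ∈ F ∩ X, m u = ∑ u ∈ F, m u + ∑ u ∈ X, m u :=
      Finset.sum_union_inter
    have h2 := hp F X
    have h3 := hm1 (F ∩ X)
    have h4 := hm1 (F ∪ X)
    have htight : ∑ u ∈ F ∩ X, m u = p (F ∩ X) := by omega
    have hmem : F ∩ X ∈ T := by
      simp only [hT, Finset.mem_filter, Finset.mem_powerset]
      exact ⟨Finset.subset_univ _, Finset.mem_inter.mpr ⟨hsF, hsX⟩, htight⟩
    have hcard := hFmin _ hmem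
    have hFX : F ∩ X = F :=
      Finset.eq_of_subset_of_card_le Finset.inter_subset_left hcard
    rw [← hFX]
    exact Finset.inter_subset_right
  have hlt : ∑ u ∈ F.erase s, m u < ∑ u ∈ F.erase s, y u := by
    have e1 : ∑ u ∈ F.erase s, m u = ∑ u ∈ F, m u - m s := Finset.sum_erase_eq_sub hsF
    have e2 : ∑ u ∈ F.erase s, y u = ∑ u ∈ F, y u - y s := Finset.sum_erase_eq_sub hsF
    have := hy1 F
    omega
  obtain ⟨t, htmem, htlt⟩ := Finset.exists_lt_of_sum_lt hlt
  have hts : t ≠ s := (Finset.mem_erase.mp htmem).1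
  have htF : t ∈ F := Finset.mem_of_mem_erase htmem
  refine ⟨t, htlt, ?_, ?_⟩
  · intro X
    rw [sum_move]
    by_cases hsX : s ∈ X
    · by_cases htX : t ∈ X
      · simp only [hsX, htX, if_true]
        have := hm1 X
        omega
      · simp only [hsX, htX, if_true, if_false]
        have hne : ∑ u ∈ X, m u ≠ p X := fun h => htX (hsub X hsX h htF)
        have := hm1 X
        omega
    · by_cases htX : t ∈ X
      · simp only [hsX, htX, if_true, if_false]
        have := hm1 X
        omega
      · simp only [hsX, htX, if_false]
        have := hm1 X
        omega
  · rw [sum_move]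
    simp only [Finset.mem_univ, if_true]
    omega

/-! #### Local optimality implies both global optimality notions -/

lemma local_to_min [Fintype α] [DecidableEq α] {p : Finset α → ℤ} (hp : Supermodular p)
    {m : α → ℤ} (hm : m ∈ Bdot p)
    (hloc : ∀ s t : α, move m s t ∈ Bdot p → m t ≤ m s + 1) :
    ∀ y ∈ Bdot p, (∑ u, (m u)^2 ≤ ∑ u, (y u)^2) ∧ DecLE m y := by
  suffices H : ∀ d : ℕ, ∀ y ∈ Bdot p, (∑ u, (m u - y u).natAbs) = d →
      (∑ u, (m u)^2 ≤ ∑ u, (y u)^2) ∧ DecLE m y by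
    exact fun y hy => H _ y hy rfl
  intro d
  induction d using Nat.strong_induction_on with
  | _ d ih =>
    intro y hy hd
    by_cases hmy : m = y
    · subst hmy
      exact ⟨le_refl _, Or.inl rfl⟩
    · -- there is a coordinate with m < y
      have hex : ∃ t, m t < y t := by
        by_contra hno
        push_neg at hno
        apply hmy
        funext u
        have hsum : ∑ u, y u = ∑ u, m u := by rw [hy.2, hm.2]
        have := (Finset.sum_eq_sum_iff_of_le (fun i _ => hno i)).mp hsum
        exact (this u (mem_univ u)).symm
      obtain ⟨t0, ht0⟩ := hex
      obtain ⟨t, htmem, htmax⟩ := Finset.exists_max_image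
        (univ.filter fun t => m t < y t) y ⟨t0, by simp [ht0]⟩
      rw [Finset.mem_filter] at htmem
      have ht : m t < y t := htmem.2
      -- exchange from y towards m at t
      obtain ⟨s, hs, hy'⟩ := exchange hp hy hm ht
      -- s has y s < m s
      -- exchange from m towards y at s
      obtain ⟨t'', ht'', hmv⟩ := exchange hp hm hy hs
      have hloc' : m s ≤ m t'' + 1 := hloc t'' s hmv
      have hyt'' : y t'' ≤ y t := htmax t'' (by simp [ht''])
      have hst : s ≠ t := by rintro rfl; omega
      have hkey : y s + 1 ≤ y t := by omega
      set y' := move y s t with hy'def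
      have hy'mem : y' ∈ Bdot p := hy'
      have hy's : y' s = y s + 1 := move_apply_s hst
      have hy't : y' t = y t - 1 := move_apply_t hst
      -- distance decreases
      have hdlt : (∑ u, (m u - y' u).natAbs) < d := by
        rw [← hd, sum_split hst (fun u => (m u - y' u).natAbs),
          sum_split hst (fun u => (m u - y u).natAbs)]
        have hrest : ∑ u ∈ (univ.erase s).erase t, (m u - y' u).natAbs
            = ∑ u ∈ (univ.erase s).erase t, (m u - y u).natAbs := by
          apply Finset.sum_congr rfl
          intro u hu
          rw [hy'def, move_apply (Finset.ne_of_mem_erase (Finset.mem_of_mem_erase hu))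
            (Finset.ne_of_mem_erase hu)]
        rw [hrest, hy's, hy't]
        omega
      obtain ⟨hW', hD'⟩ := ih _ hdlt y' hy'mem rfl
      by_cases hcase : y s + 1 = y t
      · -- the move permutes values
        have hmapeq : Finset.univ.val.map y' = Finset.univ.val.map y :=
          map_move_eq hst hcase
        have hWeq : ∑ u, (y' u)^2 = ∑ u, (y u)^2 :=
          sum_comp_eq hmapeq (fun v => v^2)
        have hDeq : sortedDesc y' = sortedDesc y := by
          rw [sortedDesc_eq_dList, sortedDesc_eq_dList, hmapeq]
        exact ⟨by omega, decLE_trans hD' (Or.inl hDeq)⟩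
      · have hkey2 : y s + 2 ≤ y t := by omega
        have hWle : ∑ u, (y' u)^2 ≤ ∑ u, (y u)^2 := by
          have := sum_sq_move y hst
          rw [← hy'def] at this
          omega
        have hDlt : List.Lex (· < ·) (sortedDesc y') (sortedDesc y) :=
          lex_move hst hkey2
        exact ⟨le_trans hW' hWle, decLE_trans hD' (Or.inr hDlt)⟩

/-- An element of `Ḃ(p)` minimizes the square-sum of components over `Ḃ(p)` iff
it is a dec-min element of `Ḃ(p)`. -/
theorem stmt13 [Fintype α] [DecidableEq α] [Nonempty α]
    (p : Finset α → ℤ) (hp : Supermodular p) (h0 : p ∅ = 0)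
    (hne : (Bdot p).Nonempty)
    (m : α → ℤ) (hm : m ∈ Bdot p) :
    (∀ y ∈ Bdot p, ∑ s : α, (m s) ^ 2 ≤ ∑ s : α, (y s) ^ 2) ↔
      (∀ y ∈ Bdot p, DecLE m y) := by
  constructor
  · intro hW y hy
    have hloc : ∀ s t : α, move m s t ∈ Bdot p → m t ≤ m s + 1 := by
      intro s t hmv
      by_cases hst : s = t
      · subst hst; omega
      · by_contra hcon
        push_neg at hcon
        have := sum_sq_move m hst
        have := hW (move m s t) hmv
        omega
    exact (local_to_min hp hm hloc y hy).2
  · intro hD y hy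
    have hloc : ∀ s t : α, move m s t ∈ Bdot p → m t ≤ m s + 1 := by
      intro s t hmv
      by_cases hst : s = t
      · subst hst; omega
      · by_contra hcon
        push_neg at hcon
        have hlex : List.Lex (· < ·) (sortedDesc (move m s t)) (sortedDesc m) :=
          lex_move hst (by omega)
        rcases hD (move m s t) hmv with heq | hlt
        · rw [heq] at hlex
          exact irrefl_of (List.Lex (· < · : ℤ → ℤ → Prop)) _ hlex
        · exact irrefl_of (List.Lex (· < · : ℤ → ℤ → Prop)) _
            (List.lex_trans lt_trans hlt hlex)
    exact (local_to_min hp hm hloc y hy).1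
end

section
/- Let p be an arbitrary integer-valued set-function on the subsets of a nonempty finite set S with p(∅) = 0 (no supermodularity assumed), and let m be an element of Ḃ(p). Then for every π : S → ℤ and every bijection σ : {1, …, n} → S with π(σ(1)) ≥ π(σ(2)) ≥ ⋯ ≥ π(σ(n)): Σ_{s ∈ S} m(s)² ≥ p̂_σ(π) − Σ_{s ∈ S} ⌊π(s)/2⌋·⌈π(s)/2⌉. Moreover, equality holds if and only if both of the following optimality criteria hold: (O1) m(s) ∈ {⌊π(s)/2⌋, ⌈π(s)/2⌉} for every s ∈ S, and (O2) every strict π-top set is m-tight with respect to p. -/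
open Finset

variable {α : Type*}

/-- The linear-extension value `p̂_σ(π)` for a nonincreasing arrangement `σ` of `π`:
`p̂_σ(π) = p(S)·π(σ(n)) + Σ_{j=1}^{n−1} p(I_j)·(π(σ(j)) − π(σ(j+1)))`,
where `I_j = {σ(1), …, σ(j)}`. -/
def phat [Fintype α] [DecidableEq α] (p : Finset α → ℤ) (π : α → ℤ)
    (σ : Fin (Fintype.card α) ≃ α) : ℤ :=
  ∑ j : Fin (Fintype.card α),
    p ((Finset.univ.filter (fun i => i ≤ j)).image σ) *
      (π (σ j) -
        if h : (j : ℕ) + 1 < Fintype.card α then π (σ ⟨(j : ℕ) + 1, h⟩) else 0)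

section AuxLemmas
open Finset

lemma floor_add_ceil_half (a : ℤ) : ⌊(a:ℚ)/2⌋ + ⌈(a:ℚ)/2⌉ = a := by
  rcases Int.even_or_odd a with ⟨b, rfl⟩ | ⟨b, rfl⟩
  · have h : ((b+b:ℤ):ℚ)/2 = (b:ℚ) := by push_cast; ring
    rw [h, Int.floor_intCast, Int.ceil_intCast]
  · have h : ((2*b+1:ℤ):ℚ)/2 = 1/2 + (b:ℚ) := by push_cast; ring
    have h3 : ⌊(1/2:ℚ)⌋ = 0 := by norm_num [Int.floor_eq_zero_iff]
    have h4 : ⌈(1/2:ℚ)⌉ = 1 := by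
      rw [Int.ceil_eq_iff] <;> norm_num
    rw [h, Int.floor_add_intCast, Int.ceil_add_intCast, h3, h4]; ring

lemma ceil_half_cases (a : ℤ) : ⌈(a:ℚ)/2⌉ = ⌊(a:ℚ)/2⌋ ∨ ⌈(a:ℚ)/2⌉ = ⌊(a:ℚ)/2⌋ + 1 := by
  have h1 := Int.floor_le ((a:ℚ)/2)
  have h2 := Int.ceil_lt_add_one ((a:ℚ)/2)
  have h3 := Int.le_ceil ((a:ℚ)/2)
  have h4 := Int.lt_floor_add_one ((a:ℚ)/2)
  have h5 : ⌈(a:ℚ)/2⌉ < ⌊(a:ℚ)/2⌋ + 2 := by exact_mod_cast (by linarith : (⌈(a:ℚ)/2⌉:ℚ) < (⌊(a:ℚ)/2⌋:ℚ) + 2)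
  have h6 : ⌊(a:ℚ)/2⌋ ≤ ⌈(a:ℚ)/2⌉ := by exact_mod_cast (by linarith : ((⌊(a:ℚ)/2⌋:ℚ)) ≤ (⌈(a:ℚ)/2⌉:ℚ))
  omega

lemma quad_key (g k c : ℤ) (h : c = k ∨ c = k + 1) :
    0 ≤ g^2 - (g*(k+c) - k*c) ∧ (g^2 - (g*(k+c) - k*c) = 0 ↔ g = k ∨ g = c) := by
  have key : g^2 - (g*(k+c) - k*c) = (g-k)*(g-c) := by ring
  constructor
  · rw [key]
    rcases h with rfl | rfl
    · exact mul_self_nonneg _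
    · rcases le_or_gt g k with h' | h' <;> nlinarith
  · rw [key, mul_eq_zero, sub_eq_zero, sub_eq_zero]

lemma abel_sum (F G : ℕ → ℤ) (N : ℕ) :
    ∑ k ∈ Finset.range N, (∑ j ∈ Finset.range (k+1), G j) * (F k - F (k+1))
      + (∑ j ∈ Finset.range N, G j) * F N = ∑ k ∈ Finset.range N, G k * F k := by
  induction N with
  | zero => simp
  | succ N ih =>
    rw [Finset.sum_range_succ (fun k => (∑ j ∈ Finset.range (k+1), G j) * (F k - F (k+1))),
      Finset.sum_range_succ (fun k => G k * F k), Finset.sum_range_succ G]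
    linear_combination ih
open Finset

lemma range_trunc_sum (G : ℕ → ℤ) (n k : ℕ) (hG0 : ∀ j, n ≤ j → G j = 0) :
    ∑ j ∈ Finset.range (k+1), G j = ∑ j ∈ Finset.range n, if j ≤ k then G j else 0 := by
  have h1 : ∑ j ∈ Finset.range (k+1), G j = ∑ j ∈ Finset.range (k+1), (if j ≤ k then G j else 0) :=
    Finset.sum_congr rfl (fun j hj => by
      rw [if_pos (Nat.lt_succ_iff.mp (Finset.mem_range.mp hj))])
  have h2 : ∑ j ∈ Finset.range (k+1), (if j ≤ k then G j else 0)
      = ∑ j ∈ Finset.range (max (k+1) n), (if j ≤ k then G j else 0) :=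
    Finset.sum_subset (Finset.range_subset_range.mpr (le_max_left _ _))
      (fun j _ hj => by
        rw [if_neg]
        intro h
        exact hj (Finset.mem_range.mpr (Nat.lt_succ_of_le h)))
  have h3 : ∑ j ∈ Finset.range n, (if j ≤ k then G j else 0)
      = ∑ j ∈ Finset.range (max (k+1) n), (if j ≤ k then G j else 0) :=
    Finset.sum_subset (Finset.range_subset_range.mpr (le_max_right _ _))
      (fun j _ hj => by
        rw [hG0 j (Nat.not_lt.mp (fun h => hj (Finset.mem_range.mpr h)))]
        simp)
  rw [h1, h2, ← h3]

end AuxLemmas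

/-- Lower bound for the integral square-sum over `Ḃ(p)` (for an arbitrary
set-function `p`), with the optimality criteria (O1) and (O2) characterizing
equality. -/
theorem stmt15 [Fintype α] [DecidableEq α] [Nonempty α]
    (p : Finset α → ℤ) (h0 : p ∅ = 0)
    (m : α → ℤ) (hm : m ∈ Bdot p)
    (π : α → ℤ) (σ : Fin (Fintype.card α) ≃ α)
    (hσ : ∀ i j : Fin (Fintype.card α), i ≤ j → π (σ j) ≤ π (σ i)) :
    (phat p π σ - ∑ s : α, ⌊(π s : ℚ) / 2⌋ * ⌈(π s : ℚ) / 2⌉ ≤ ∑ s : α, (m s) ^ 2) ∧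
    (∑ s : α, (m s) ^ 2 =
        phat p π σ - ∑ s : α, ⌊(π s : ℚ) / 2⌋ * ⌈(π s : ℚ) / 2⌉ ↔
      ((∀ s : α, m s = ⌊(π s : ℚ) / 2⌋ ∨ m s = ⌈(π s : ℚ) / 2⌉) ∧
       (∀ X : Finset α, X.Nonempty →
          (∀ u ∈ X, ∀ v : α, v ∉ X → π v < π u) → ∑ s ∈ X, m s = p X))) := by
  classical
  obtain ⟨hm1, hm2⟩ := hm
  have hn0 : 0 < Fintype.card α := Fintype.card_pos
  set F : ℕ → ℤ := fun k => if h : k < (Fintype.card α) then π (σ ⟨k, h⟩) else 0 with hF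
  set G : ℕ → ℤ := fun k => if h : k < (Fintype.card α) then m (σ ⟨k, h⟩) else 0 with hG
  set Iq : ℕ → Finset α :=
    fun k => (Finset.univ.filter (fun i : Fin (Fintype.card α) => (i : ℕ) ≤ k)).image σ with hIq
  set Pq : ℕ → ℤ := fun k => p (Iq k) with hPq
  set Mq : ℕ → ℤ := fun k => ∑ j ∈ Finset.range (k+1), G j with hMq
  have hFval : ∀ i : Fin (Fintype.card α), F (i : ℕ) = π (σ i) := fun i => dif_pos i.isLt
  have hGval : ∀ i : Fin (Fintype.card α), G (i : ℕ) = m (σ i) := fun i => dif_pos i.isLt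
  have hG0 : ∀ j, (Fintype.card α) ≤ j → G j = 0 := fun j hj => dif_neg (Nat.not_lt.mpr hj)
  have hFn : F (Fintype.card α) = 0 := dif_neg (lt_irrefl (Fintype.card α))
  -- membership in Iq
  have hIq_mem : ∀ (k : ℕ) (s : α), s ∈ Iq k ↔ ((σ.symm s : Fin (Fintype.card α)) : ℕ) ≤ k := by
    intro k s
    rw [hIq]
    simp only [Finset.mem_image, Finset.mem_filter, Finset.mem_univ, true_and]
    constructor
    · rintro ⟨i, hi, rfl⟩
      rwa [Equiv.symm_apply_apply]
    · intro h
      exact ⟨σ.symm s, h, Equiv.apply_symm_apply σ s⟩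
  -- sum over Iq equals Mq
  have hMqI : ∀ k, Mq k = ∑ s ∈ Iq k, m s := by
    intro k
    rw [hIq]
    rw [Finset.sum_image (fun x _ y _ h => σ.injective h)]
    rw [Finset.sum_filter]
    have step1 : ∀ i : Fin (Fintype.card α),
        (if (i : ℕ) ≤ k then m (σ i) else 0) = (fun j => if j ≤ k then G j else 0) (i : ℕ) := by
      intro i
      by_cases h : (i : ℕ) ≤ k <;> simp [h, hGval i]
    rw [Finset.sum_congr rfl (fun i _ => step1 i)]
    rw [Fin.sum_univ_eq_sum_range (fun j => if j ≤ k then G j else 0) (Fintype.card α)]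
    exact range_trunc_sum G (Fintype.card α) k hG0
  -- last index: Iq = univ
  have hIq_univ : ∀ k, (Fintype.card α) ≤ k + 1 → Iq k = Finset.univ := by
    intro k hk
    apply Finset.eq_univ_of_forall
    intro s
    rw [hIq_mem]
    exact Nat.lt_succ_iff.mp (lt_of_lt_of_le (σ.symm s).isLt hk)
  have hMqPq_last : ∀ k, (Fintype.card α) ≤ k + 1 → Mq k = Pq k := by
    intro k hk
    have hP : Pq k = p Finset.univ := by
      rw [hPq]
      show p (Iq k) = p Finset.univ
      rw [hIq_univ k hk]
    rw [hMqI, hIq_univ k hk, hP, hm2]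
  -- reindex square sum
  have hsq : ∑ s : α, m s ^ 2 = ∑ k ∈ Finset.range (Fintype.card α), G k ^ 2 := by
    rw [← Equiv.sum_comp σ (fun s => m s ^ 2)]
    rw [← Fin.sum_univ_eq_sum_range (fun k => G k ^ 2) (Fintype.card α)]
    exact Finset.sum_congr rfl (fun i _ => by rw [hGval i])
  -- reindex floor-ceil sum
  have hfc : ∑ s : α, ⌊(π s : ℚ) / 2⌋ * ⌈(π s : ℚ) / 2⌉
      = ∑ k ∈ Finset.range (Fintype.card α), ⌊(F k : ℚ) / 2⌋ * ⌈(F k : ℚ) / 2⌉ := by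
    rw [← Equiv.sum_comp σ (fun s => ⌊(π s : ℚ) / 2⌋ * ⌈(π s : ℚ) / 2⌉)]
    rw [← Fin.sum_univ_eq_sum_range (fun k => ⌊(F k : ℚ) / 2⌋ * ⌈(F k : ℚ) / 2⌉) (Fintype.card α)]
    exact Finset.sum_congr rfl (fun i _ => by rw [hFval i])
  -- phat as range sum
  have hphat : phat p π σ = ∑ k ∈ Finset.range (Fintype.card α), Pq k * (F k - F (k + 1)) := by
    rw [phat]
    rw [← Fin.sum_univ_eq_sum_range (fun k => Pq k * (F k - F (k + 1))) (Fintype.card α)]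
    apply Finset.sum_congr rfl
    intro j _
    have hfil : (Finset.univ.filter (fun i : Fin (Fintype.card α) => i ≤ j))
        = Finset.univ.filter (fun i : Fin (Fintype.card α) => (i : ℕ) ≤ (j : ℕ)) := by
      apply Finset.filter_congr
      intro i _
      exact Fin.le_def
    rw [hfil, ← hFval j]
  -- the two families of nonnegative terms
  set t1 : ℕ → ℤ := fun k => G k ^ 2 - G k * F k + ⌊(F k : ℚ) / 2⌋ * ⌈(F k : ℚ) / 2⌉ with ht1
  set t2 : ℕ → ℤ := fun k => (Mq k - Pq k) * (F k - F (k + 1)) with ht2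
  have ht1_key : ∀ k, 0 ≤ t1 k ∧
      (t1 k = 0 ↔ G k = ⌊(F k : ℚ) / 2⌋ ∨ G k = ⌈(F k : ℚ) / 2⌉) := by
    intro k
    have hq := quad_key (G k) ⌊(F k : ℚ) / 2⌋ ⌈(F k : ℚ) / 2⌉ (ceil_half_cases (F k))
    have hfce := floor_add_ceil_half (F k)
    have heq : t1 k = G k ^ 2 -
        (G k * (⌊(F k : ℚ) / 2⌋ + ⌈(F k : ℚ) / 2⌉) - ⌊(F k : ℚ) / 2⌋ * ⌈(F k : ℚ) / 2⌉) := by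
      rw [ht1]
      show G k ^ 2 - G k * F k + ⌊(F k : ℚ) / 2⌋ * ⌈(F k : ℚ) / 2⌉ = _
      rw [hfce]
      ring
    rw [heq]
    exact hq
  -- monotonicity of F and lower bound for Mq
  have hFmono : ∀ k, k + 1 < (Fintype.card α) → F (k + 1) ≤ F k := by
    intro k hk1
    have hk : k < (Fintype.card α) := Nat.lt_of_succ_lt hk1
    rw [show F k = π (σ ⟨k, hk⟩) from dif_pos hk,
      show F (k+1) = π (σ ⟨k+1, hk1⟩) from dif_pos hk1]
    exact hσ ⟨k, hk⟩ ⟨k+1, hk1⟩ (by simp)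
  have hPqMq : ∀ k, Pq k ≤ Mq k := by
    intro k
    rw [hMqI]
    exact hm1 (Iq k)
  have ht2_key : ∀ k, 0 ≤ t2 k := by
    intro k
    by_cases hk1 : k + 1 < (Fintype.card α)
    · exact mul_nonneg (sub_nonneg.mpr (hPqMq k)) (sub_nonneg.mpr (hFmono k hk1))
    · show 0 ≤ (Mq k - Pq k) * (F k - F (k + 1))
      rw [hMqPq_last k (Nat.not_lt.mp hk1), sub_self, zero_mul]
  -- main identity
  have habel := abel_sum F G (Fintype.card α)
  rw [hFn, mul_zero, add_zero] at habel
  have hE : (∑ s : α, m s ^ 2) -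
      (phat p π σ - ∑ s : α, ⌊(π s : ℚ) / 2⌋ * ⌈(π s : ℚ) / 2⌉)
      = ∑ k ∈ Finset.range (Fintype.card α), (t1 k + t2 k) := by
    have h1 : ∑ k ∈ Finset.range (Fintype.card α), t1 k
        = (∑ k ∈ Finset.range (Fintype.card α), G k ^ 2) - (∑ k ∈ Finset.range (Fintype.card α), G k * F k)
          + ∑ k ∈ Finset.range (Fintype.card α), ⌊(F k : ℚ) / 2⌋ * ⌈(F k : ℚ) / 2⌉ := by
      rw [ht1, Finset.sum_add_distrib, Finset.sum_sub_distrib]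
    have h2 : ∑ k ∈ Finset.range (Fintype.card α), t2 k
        = (∑ k ∈ Finset.range (Fintype.card α), G k * F k)
          - ∑ k ∈ Finset.range (Fintype.card α), Pq k * (F k - F (k + 1)) := by
      rw [ht2]
      rw [show (fun k => (Mq k - Pq k) * (F k - F (k+1)))
          = fun k => Mq k * (F k - F (k+1)) - Pq k * (F k - F (k+1)) from
        funext (fun k => by ring)]
      rw [Finset.sum_sub_distrib]
      rw [show (∑ k ∈ Finset.range (Fintype.card α), Mq k * (F k - F (k+1)))
          = ∑ k ∈ Finset.range (Fintype.card α), G k * F k from by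
        rw [← habel]]
    rw [Finset.sum_add_distrib, h1, h2, hsq, hfc, hphat]
    ring
  have hnonneg : 0 ≤ ∑ k ∈ Finset.range (Fintype.card α), (t1 k + t2 k) :=
    Finset.sum_nonneg (fun k _ => add_nonneg (ht1_key k).1 (ht2_key k))
  constructor
  · linarith [hE, hnonneg]
  -- equality part
  have hzero : (∑ s : α, m s ^ 2 =
      phat p π σ - ∑ s : α, ⌊(π s : ℚ) / 2⌋ * ⌈(π s : ℚ) / 2⌉)
      ↔ ∀ k ∈ Finset.range (Fintype.card α), t1 k + t2 k = 0 := by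
    have hstep : (∑ s : α, m s ^ 2 =
        phat p π σ - ∑ s : α, ⌊(π s : ℚ) / 2⌋ * ⌈(π s : ℚ) / 2⌉)
        ↔ (∑ k ∈ Finset.range (Fintype.card α), (t1 k + t2 k) = 0) := by
      constructor <;> intro h <;> linarith [hE]
    rw [hstep,
      Finset.sum_eq_zero_iff_of_nonneg (fun k _ => add_nonneg (ht1_key k).1 (ht2_key k))]
  have hO1 : (∀ k ∈ Finset.range (Fintype.card α), t1 k = 0) ↔
      (∀ s : α, m s = ⌊(π s : ℚ) / 2⌋ ∨ m s = ⌈(π s : ℚ) / 2⌉) := by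
    constructor
    · intro h s
      have hk : ((σ.symm s : Fin _) : ℕ) < Fintype.card α := (σ.symm s).isLt
      have h2 := (ht1_key _).2.mp (h _ (Finset.mem_range.mpr hk))
      rwa [hGval (σ.symm s), hFval (σ.symm s), Equiv.apply_symm_apply] at h2
    · intro h k hk
      rw [(ht1_key k).2]
      have hk' : k < Fintype.card α := Finset.mem_range.mp hk
      rw [show G k = m (σ ⟨k, hk'⟩) from dif_pos hk',
        show F k = π (σ ⟨k, hk'⟩) from dif_pos hk']
      exact h (σ ⟨k, hk'⟩)
  have hO2 : (∀ k ∈ Finset.range (Fintype.card α), t2 k = 0) ↔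
      (∀ X : Finset α, X.Nonempty →
        (∀ u ∈ X, ∀ v : α, v ∉ X → π v < π u) → ∑ s ∈ X, m s = p X) := by
    constructor
    · intro h X hXne hXtop
      have hdc : ∀ i j : Fin (Fintype.card α), i ≤ j → σ j ∈ X → σ i ∈ X := by
        intro i j hij hj
        by_contra hi
        exact absurd (hXtop (σ j) hj (σ i) hi) (not_lt.mpr (hσ i j hij))
      obtain ⟨s0, hs0, hsup⟩ :=
        Finset.exists_max_image X (fun s => ((σ.symm s : Fin _) : ℕ)) hXne
      set km := ((σ.symm s0 : Fin _) : ℕ) with hkm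
      have hkmlt : km < Fintype.card α := (σ.symm s0).isLt
      have hXeq : X = Iq km := by
        ext s
        rw [hIq_mem]
        constructor
        · intro hs; exact hsup s hs
        · intro hs
          have hle : (σ.symm s) ≤ (σ.symm s0) := by
            rw [Fin.le_def]; omega
          have hmem := hdc (σ.symm s) (σ.symm s0) hle
            (by rw [Equiv.apply_symm_apply]; exact hs0)
          rwa [Equiv.apply_symm_apply] at hmem
      by_cases hk1 : km + 1 < Fintype.card α
      · have hnot : σ ⟨km + 1, hk1⟩ ∉ X := by
          intro hmem
          have h2 := hsup _ hmem
          rw [Equiv.symm_apply_apply] at h2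
          have h3 : km + 1 ≤ km := by simpa using h2
          omega
        have hs0eq : σ ⟨km, hkmlt⟩ = s0 := by
          have : (⟨km, hkmlt⟩ : Fin (Fintype.card α)) = σ.symm s0 := Fin.ext hkm
          rw [this, Equiv.apply_symm_apply]
        have hstrict : F (km + 1) < F km := by
          rw [show F (km + 1) = π (σ ⟨km + 1, hk1⟩) from dif_pos hk1,
            show F km = π (σ ⟨km, hkmlt⟩) from dif_pos hkmlt, hs0eq]
          exact hXtop s0 hs0 _ hnot
        have ht2z : (Mq km - Pq km) * (F km - F (km + 1)) = 0 :=
          h km (Finset.mem_range.mpr hkmlt)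
        have hMP : Mq km = Pq km := by
          rcases mul_eq_zero.mp ht2z with h' | h'
          · linarith
          · exfalso; linarith
        rw [hXeq, ← hMqI, hMP]
      · rw [hXeq, hIq_univ km (Nat.not_lt.mp hk1), hm2]
    · intro h k hk
      have hk' : k < Fintype.card α := Finset.mem_range.mp hk
      by_cases hk1 : k + 1 < Fintype.card α
      · rcases eq_or_lt_of_le (hFmono k hk1) with heq | hlt
        · show (Mq k - Pq k) * (F k - F (k + 1)) = 0
          rw [heq, sub_self, mul_zero]
        · have hne : (Iq k).Nonempty := ⟨σ ⟨0, hn0⟩, by rw [hIq_mem]; simp⟩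
          have htop : ∀ u ∈ Iq k, ∀ v : α, v ∉ Iq k → π v < π u := by
            intro u hu v hv
            rw [hIq_mem] at hu hv
            rw [Nat.not_le] at hv
            have h1 : π v ≤ F (k + 1) := by
              rw [show F (k + 1) = π (σ ⟨k + 1, hk1⟩) from dif_pos hk1]
              have h3 := hσ ⟨k + 1, hk1⟩ (σ.symm v) (by rw [Fin.le_def]; exact hv)
              rwa [Equiv.apply_symm_apply] at h3
            have h2 : F k ≤ π u := by
              rw [show F k = π (σ ⟨k, hk'⟩) from dif_pos hk']
              have h3 := hσ (σ.symm u) ⟨k, hk'⟩ (by rw [Fin.le_def]; exact hu)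
              rwa [Equiv.apply_symm_apply] at h3
            linarith
          have hsum := h (Iq k) hne htop
          show (Mq k - Pq k) * (F k - F (k + 1)) = 0
          have hMP : Mq k = Pq k := by rw [hMqI, hsum]
          rw [hMP, sub_self, zero_mul]
      · show (Mq k - Pq k) * (F k - F (k + 1)) = 0
        rw [hMqPq_last k (Nat.not_lt.mp hk1), sub_self, zero_mul]
  rw [hzero]
  constructor
  · intro h
    refine ⟨hO1.mp (fun k hk => ?_), hO2.mp (fun k hk => ?_)⟩
    · have := h k hk
      have := (ht1_key k).1
      have := ht2_key k
      linarith
    · have := h k hk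
      have := (ht1_key k).1
      have := ht2_key k
      linarith
  · rintro ⟨hA, hB⟩ k hk
    have h1 := hO1.mpr hA k hk
    have h2 := hO2.mpr hB k hk
    rw [h1, h2, add_zero]
end
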